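/- arXiv:1309.6178 — 4 statements merged into one kernel-verified Lean document; each statement's English description precedes it below -/
import Mathlib

section
/- Let λ be a (normalized) pre-average function. Then ∫₀² ∫₀² λ(s) λ(t) min(s,t) dt ds = 1. -/
open MeasureTheory ProbabilityTheory Real

noncomputable section

/-- `Λ(u) = -∫₀ᵘ λ(v) dv`. -/
def bigLam (lam : ℝ → ℝ) (u : ℝ) : ℝ := -∫ v in (0:ℝ)..u, lam v

/-- A (normalized) pre-average function: piecewise Lipschitz on `[0,2]`,
antisymmetric about `1`, and normalized. -/
structure IsPreAverageFn (lam : ℝ → ℝ) : Prop where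
  piecewise_lipschitz : ∃ (N : ℕ) (t : ℕ → ℝ) (K : NNReal),
      0 < N ∧ t 0 = 0 ∧ t N = 2 ∧ (∀ i < N, t i < t (i + 1)) ∧
      ∀ i < N, LipschitzOnWith K lam (Set.Ioo (t i) (t (i + 1)))
  antisymm : ∀ t ∈ Set.Icc (0:ℝ) 1, lam t = - lam (2 - t)
  normalized : Real.sqrt (2 * ∫ s in (0:ℝ)..1, (∫ u in (0:ℝ)..s, lam u) ^ 2) = 1

/-- `m = n / ⌊√n / c⌋`. -/
def mOf (c : ℝ) (n : ℕ) : ℕ := n / ⌊Real.sqrt n / c⌋₊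

/-- The indices `j` with `j/n ∈ [(i-2)/m , i/m]`. -/
def blockIdx (n m i : ℕ) : Finset ℕ :=
  (Finset.range (n + 1)).filter fun j =>
    ((i : ℝ) - 2) / m ≤ (j : ℝ) / n ∧ (j : ℝ) / n ≤ (i : ℝ) / m

variable {Ω : Type*}

/-- Pre-averaged value `Ā_{i,m} = (m/n) ∑_{j/n ∈ [(i-2)/m, i/m]} λ(m j/n - (i-2)) A_j`. -/
def preAvg (lam : ℝ → ℝ) (n m : ℕ) (A : ℕ → Ω → ℝ) (i : ℕ) (ω : Ω) : ℝ :=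
  ((m : ℝ) / n) * ∑ j ∈ blockIdx n m i,
    lam ((m : ℝ) * j / n - ((i : ℝ) - 2)) * A j ω

/-- Bias correction `𝔟(λ, A)_{i,m}`. -/
def biasCorr (lam : ℝ → ℝ) (n m : ℕ) (A : ℕ → Ω → ℝ) (i : ℕ) (ω : Ω) : ℝ :=
  ((m : ℝ) ^ 2 / (2 * (n : ℝ) ^ 2)) * ∑ j ∈ (blockIdx n m i).filter (fun j => 1 ≤ j),
    (lam ((m : ℝ) * j / n - ((i : ℝ) - 2))) ^ 2 * (A j ω - A (j - 1) ω) ^ 2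

/-- The simplified model: `(W_{j/n})_j` and `(η_{j,n})_j` form a centered jointly Gaussian
family with `Cov(W_{j/n}, W_{l/n}) = min(j,l)/n`, `(η_{j,n})` standard Gaussian i.i.d.
and uncorrelated with the `W` grid values. -/
def IsSimplifiedModel [MeasureSpace Ω] (n : ℕ) (W η : ℕ → Ω → ℝ) : Prop :=
  (∀ j, Measurable (W j)) ∧ (∀ j, Measurable (η j)) ∧
  (∀ a b : ℕ → ℝ, ∃ v : NNReal,
    Measure.map (fun ω => ∑ j ∈ Finset.range (n + 1), (a j * W j ω + b j * η j ω)) ℙ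
      = gaussianReal 0 v) ∧
  (∀ j l, j ≤ n → l ≤ n → ∫ ω, W j ω * W l ω = (min j l : ℝ) / n) ∧
  (∀ j l, j ≤ n → l ≤ n → ∫ ω, η j ω * η l ω = if j = l then 1 else 0) ∧
  (∀ j l, j ≤ n → l ≤ n → ∫ ω, W j ω * η l ω = 0)

/-- The observations `Y_{j,n} = σ W_{j/n} + τ η_{j,n}`. -/
def obs (σ τ : ℝ) (W η : ℕ → Ω → ℝ) (j : ℕ) (ω : Ω) : ℝ := σ * W j ω + τ * η j ω

end

section AuxPreAvg
open MeasureTheory Set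

lemma chain_mono {N : ℕ} {t : ℕ → ℝ} (hmono : ∀ i < N, t i < t (i + 1)) :
    ∀ i j, i ≤ j → j ≤ N → t i ≤ t j := by
  intro i j hij hjN
  induction j with
  | zero => simp_all
  | succ n ih =>
    rcases Nat.lt_or_ge i (n+1) with h | h
    · have h1 : t i ≤ t n := ih (Nat.lt_succ_iff.mp h) (le_trans (Nat.le_succ n) hjN)
      exact le_trans h1 (le_of_lt (hmono n (Nat.lt_of_succ_le hjN)))
    · have : i = n + 1 := le_antisymm hij h
      simp [this]

lemma exists_rep (lam : ℝ → ℝ)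
    (hpl : ∃ (N : ℕ) (t : ℕ → ℝ) (K : NNReal),
      0 < N ∧ t 0 = 0 ∧ t N = 2 ∧ (∀ i < N, t i < t (i + 1)) ∧
      ∀ i < N, LipschitzOnWith K lam (Set.Ioo (t i) (t (i + 1)))) :
    ∃ (g : ℝ → ℝ) (C : ℝ), 0 ≤ C ∧ Measurable g ∧ (∀ x, |g x| ≤ C) ∧
      ∀ᵐ x ∂(volume.restrict (Set.Ioc (0:ℝ) 2)), g x = lam x := by
  obtain ⟨N, t, K, hN, ht0, htN, hmono, hlip⟩ := hpl
  set S : Set ℝ := ⋃ i ∈ Finset.range N, Ioo (t i) (t (i + 1)) with hS_def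
  have hSopen : IsOpen S := isOpen_biUnion (fun i _ => isOpen_Ioo)
  -- continuity on S
  have hcont : ContinuousOn lam S := by
    intro x hx
    simp only [hS_def, Set.mem_iUnion] at hx
    obtain ⟨i, hi, hxi⟩ := hx
    simp only [Finset.mem_range] at hi
    have h1 : ContinuousOn lam (Ioo (t i) (t (i+1))) := (hlip i hi).continuousOn
    have h2 : ContinuousWithinAt lam (Ioo (t i) (t (i+1))) x := h1 x hxi
    have h3 : ContinuousAt lam x := h2.continuousAt (isOpen_Ioo.mem_nhds hxi)
    exact h3.continuousWithinAt
  -- complement within Ioc 0 2 is finite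
  have hsub : Ioc (0:ℝ) 2 \ S ⊆ ↑((Finset.range (N+1)).image t) := by
    intro x hx
    simp only [Finset.coe_image, Finset.coe_range, Set.mem_image]
    by_contra hcon
    push_neg at hcon
    have hne : ∀ j, j ≤ N → t j ≠ x := by
      intro j hj
      exact hcon j (by simpa [Set.mem_Iio] using Nat.lt_succ_of_le hj)
    obtain ⟨hx1, hx2⟩ := hx
    obtain ⟨hx0, hx2'⟩ := hx1
    -- largest index with t j < x
    set A := (Finset.range (N+1)).filter (fun j => t j < x) with hA
    have h0A : 0 ∈ A := by
      simp [hA, ht0, hx0, Nat.succ_pos]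
    have hAne : A.Nonempty := ⟨0, h0A⟩
    set i := A.max' hAne with hi
    have hiA : i ∈ A := A.max'_mem hAne
    have hiN : i ≤ N := by
      have := (Finset.mem_filter.mp hiA).1
      simpa [Nat.lt_succ_iff] using this
    have hti : t i < x := (Finset.mem_filter.mp hiA).2
    have hiN' : i < N := by
      rcases lt_or_eq_of_le hiN with h | h
      · exact h
      · exfalso
        rw [h] at hti
        rw [htN] at hti
        exact absurd hti (not_lt.mpr hx2')
    have hnext : ¬ (t (i+1) < x) := by
      intro hcon2
      have : i + 1 ∈ A := by
        simp only [hA, Finset.mem_filter, Finset.mem_range]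
        exact ⟨Nat.succ_lt_succ hiN', hcon2⟩
      have := A.le_max' _ this
      omega
    have : x < t (i+1) :=
      lt_of_le_of_ne (not_lt.mp hnext) (fun h => hne (i+1) hiN' h.symm)
    exact hx2 (Set.mem_iUnion₂.mpr ⟨i, Finset.mem_range.mpr hiN', hti, this⟩)
  have hnull : volume (Ioc (0:ℝ) 2 \ S) = 0 :=
    measure_mono_null hsub (Set.Finite.measure_zero (Finset.finite_toSet _) _)
  -- restrict equality
  have hres : volume.restrict (Ioc (0:ℝ) 2) = volume.restrict (Ioc (0:ℝ) 2 ∩ S) := by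
    apply Measure.restrict_congr_set
    rw [Filter.eventuallyEq_set]
    rw [MeasureTheory.ae_iff]
    apply measure_mono_null _ hnull
    intro x hx
    simp only [Set.mem_setOf_eq, Set.mem_inter_iff, not_iff] at hx
    constructor
    · tauto
    · tauto
  have hle : volume.restrict (Ioc (0:ℝ) 2) ≤ volume.restrict S := by
    rw [hres]
    exact Measure.restrict_mono Set.inter_subset_right le_rfl
  have haesm : AEStronglyMeasurable lam (volume.restrict (Ioc (0:ℝ) 2)) :=
    (hcont.aestronglyMeasurable hSopen.measurableSet).mono_measure hle
  -- bound on S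
  have hNne : (Finset.range N).Nonempty := ⟨0, Finset.mem_range.mpr hN⟩
  set M : ℝ := (Finset.range N).sup' hNne (fun i => |lam ((t i + t (i+1))/2)|) with hM
  have hM0 : 0 ≤ M :=
    le_trans (abs_nonneg (lam ((t 0 + t 1)/2)))
      (Finset.le_sup' (fun i => |lam ((t i + t (i+1))/2)|) (Finset.mem_range.mpr hN))
  set C : ℝ := 2 * K + M with hC
  have hC0 : 0 ≤ C := by positivity
  have hboundS : ∀ x ∈ S, |lam x| ≤ C := by
    intro x hx
    simp only [hS_def, Set.mem_iUnion] at hx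
    obtain ⟨i, hi, hxi⟩ := hx
    simp only [Finset.mem_range] at hi
    set m := (t i + t (i+1))/2 with hm
    have hmI : m ∈ Ioo (t i) (t (i+1)) := ⟨by nlinarith [hxi.1, hxi.2], by nlinarith [hxi.1, hxi.2]⟩
    have hd := (hlip i hi).dist_le_mul x hxi m hmI
    rw [Real.dist_eq, Real.dist_eq] at hd
    have hti0 : (0:ℝ) ≤ t i := by
      have := chain_mono hmono 0 i (Nat.zero_le i) (le_of_lt hi)
      linarith [this, ht0.ge, ht0.le]
    have hti2 : t (i+1) ≤ 2 := by
      have := chain_mono hmono (i+1) N (Nat.succ_le_of_lt hi) le_rfl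
      linarith [this, htN.le]
    have hxm : |x - m| ≤ 2 := by
      rw [abs_le]
      constructor <;> [nlinarith [hxi.1, hxi.2, hmI.1, hmI.2]; nlinarith [hxi.1, hxi.2, hmI.1, hmI.2]]
    have hMi : |lam m| ≤ M := Finset.le_sup' (fun i => |lam ((t i + t (i+1))/2)|) (Finset.mem_range.mpr hi)
    calc |lam x| ≤ |lam x - lam m| + |lam m| := by
          have h := abs_add_le (lam x - lam m) (lam m)
          simpa using h
      _ ≤ K * |x - m| + M := add_le_add hd hMi
      _ ≤ K * 2 + M := by nlinarith [NNReal.coe_nonneg K]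
      _ = C := by ring
  -- ae bound wrt restrict Ioc
  have haeS : ∀ᵐ x ∂(volume.restrict S), |lam x| ≤ C := by
    rw [ae_restrict_iff' hSopen.measurableSet]
    exact Filter.Eventually.of_forall hboundS
  have haebound : ∀ᵐ x ∂(volume.restrict (Ioc (0:ℝ) 2)), |lam x| ≤ C := by
    exact Filter.Eventually.filter_mono (ae_mono hle) haeS
  -- construct g
  set mk := haesm.mk lam with hmk
  refine ⟨fun x => max (-C) (min C (mk x)), C, hC0, ?_, ?_, ?_⟩
  · exact measurable_const.max (measurable_const.min haesm.stronglyMeasurable_mk.measurable)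
  · intro x
    rw [abs_le]
    refine ⟨le_max_left _ _, max_le (by linarith) (min_le_left _ _)⟩
  · filter_upwards [haesm.ae_eq_mk, haebound] with x h1 h2
    rw [abs_le] at h2
    show -C ⊔ C ⊓ mk x = lam x
    rw [hmk, ← h1]
    rw [min_eq_right h2.2, max_eq_right h2.1]

-- assume rep results, prove the integral identity
lemma main_aux (lam g : ℝ → ℝ) (C : ℝ) (hC0 : 0 ≤ C) (hg : Measurable g)
    (hgb : ∀ x, |g x| ≤ C)
    (hae : ∀ᵐ x ∂(volume.restrict (Set.Ioc (0:ℝ) 2)), g x = lam x)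
    (hanti : ∀ t ∈ Set.Icc (0:ℝ) 1, lam t = - lam (2 - t))
    (hnorm : Real.sqrt (2 * ∫ s in (0:ℝ)..1, (∫ u in (0:ℝ)..s, lam u) ^ 2) = 1) :
    ∫ s in (0:ℝ)..2, ∫ t in (0:ℝ)..2, lam s * lam t * min s t = 1 := by
  -- interval integrability of g
  have hgi : ∀ a b : ℝ, IntervalIntegrable g volume a b := by
    intro a b
    rw [intervalIntegrable_iff]
    have hconst : IntegrableOn (fun _ : ℝ => C) (Set.uIoc a b) volume :=
      (integrableOn_const_iff).mpr (Or.inr measure_Ioc_lt_top)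
    refine hconst.mono' hg.aestronglyMeasurable.restrict
      (Filter.Eventually.of_forall fun x => ?_)
    simpa using hgb x
  set F : ℝ → ℝ := fun s => ∫ u in (0:ℝ)..s, g u with hF
  have hFc : Continuous F := intervalIntegral.continuous_primitive hgi 0
  have hFb : ∀ u ∈ Set.Icc (0:ℝ) 2, |F u| ≤ 2 * C := by
    intro u hu
    have h1 : ∀ x ∈ Set.uIoc (0:ℝ) u, ‖g x‖ ≤ C := fun x _ => by simpa using hgb x
    have h2 := intervalIntegral.norm_integral_le_of_norm_le_const h1
    have : |u - 0| ≤ 2 := by rw [abs_le]; constructor <;> linarith [hu.1, hu.2]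
    calc |F u| ≤ C * |u - 0| := h2
      _ ≤ 2 * C := by nlinarith
  -- transfer integrals of g to lam
  have hcongr : ∀ a b : ℝ, 0 ≤ a → b ≤ 2 → a ≤ b →
      (∫ x in a..b, g x) = ∫ x in a..b, lam x := by
    intro a b ha hb hab
    rw [intervalIntegral.integral_of_le hab, intervalIntegral.integral_of_le hab]
    apply setIntegral_congr_ae measurableSet_Ioc
    have hsub : Set.Ioc a b ⊆ Set.Ioc (0:ℝ) 2 := Set.Ioc_subset_Ioc ha hb
    have h' := (ae_restrict_iff' measurableSet_Ioc).mp hae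
    filter_upwards [h'] with x hx hxab
    exact hx (hsub hxab)
  -- ∫₀² g = 0 and symmetry of F
  have hint12 : ∫ x in (1:ℝ)..2, lam x = - ∫ x in (0:ℝ)..1, lam x := by
    have h1 : ∫ x in (0:ℝ)..1, lam (2 - x) = ∫ x in (1:ℝ)..2, lam x := by
      rw [intervalIntegral.integral_comp_sub_left lam 2]; norm_num
    have h2 : ∫ x in (0:ℝ)..1, lam (2 - x) = ∫ x in (0:ℝ)..1, -lam x := by
      apply intervalIntegral.integral_congr
      intro x hx
      rw [Set.uIcc_of_le (by norm_num : (0:ℝ) ≤ 1)] at hx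
      have := hanti x hx
      show lam (2 - x) = -lam x
      linarith
    rw [← h1, h2, intervalIntegral.integral_neg]
  have hF2 : F 2 = 0 := by
    have hadd := intervalIntegral.integral_add_adjacent_intervals (hgi 0 1) (hgi 1 2)
    have e1 : (∫ x in (0:ℝ)..1, g x) = ∫ x in (0:ℝ)..1, lam x := hcongr 0 1 (by norm_num) (by norm_num) (by norm_num)
    have e2 : (∫ x in (1:ℝ)..2, g x) = ∫ x in (1:ℝ)..2, lam x := hcongr 1 2 (by norm_num) (by norm_num) (by norm_num)
    show (∫ u in (0:ℝ)..2, g u) = 0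
    rw [← hadd, e1, e2, hint12]; ring
  have hFsymm : ∀ u ∈ Set.Icc (0:ℝ) 1, F (2 - u) = F u := by
    intro u hu
    have hadd := intervalIntegral.integral_add_adjacent_intervals (hgi 0 (2-u)) (hgi (2-u) 2)
    have e2 : (∫ x in (2-u:ℝ)..2, g x) = ∫ x in (2-u:ℝ)..2, lam x :=
      hcongr (2-u) 2 (by linarith [hu.2]) le_rfl (by linarith [hu.1])
    have h1 : ∫ x in (0:ℝ)..u, lam (2 - x) = ∫ x in (2-u:ℝ)..2, lam x := by
      rw [intervalIntegral.integral_comp_sub_left lam 2]; norm_num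
    have h2 : ∫ x in (0:ℝ)..u, lam (2 - x) = ∫ x in (0:ℝ)..u, -lam x := by
      apply intervalIntegral.integral_congr
      intro x hx
      rw [Set.uIcc_of_le hu.1] at hx
      have hx' : x ∈ Set.Icc (0:ℝ) 1 := ⟨hx.1, le_trans hx.2 hu.2⟩
      have := hanti x hx'
      show lam (2 - x) = -lam x
      linarith
    have e1 : (∫ x in (0:ℝ)..u, g x) = ∫ x in (0:ℝ)..u, lam x :=
      hcongr 0 u le_rfl (by linarith [hu.2]) hu.1
    have : F (2 - u) + ∫ x in (2-u:ℝ)..2, g x = 0 := by rw [hadd]; exact hF2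
    have h3 : (∫ x in (2-u:ℝ)..2, g x) = - F u := by
      rw [e2, ← h1, h2, intervalIntegral.integral_neg, ← e1]
    rw [h3] at this; linarith
  -- measure setup
  set ν : Measure ℝ := volume.restrict (Set.Ioc (0:ℝ) 2) with hν
  haveI : IsFiniteMeasure ν := by
    constructor
    rw [hν, Measure.restrict_apply_univ]
    exact measure_Ioc_lt_top
  -- J computation
  have hJ : ∀ u ∈ Set.Ioc (0:ℝ) 2,
      (∫ t in Set.Ioc (0:ℝ) 2, g t * (if u ≤ t then (1:ℝ) else 0)) = - F u := by
    intro u hu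
    have h1 : ∀ t, g t * (if u ≤ t then (1:ℝ) else 0) = (Set.Ici u).indicator g t := by
      intro t
      by_cases h : u ≤ t <;> simp [Set.indicator, h]
    simp only [h1]
    rw [MeasureTheory.integral_indicator measurableSet_Ici,
      Measure.restrict_restrict measurableSet_Ici]
    have h2 : Set.Ici u ∩ Set.Ioc (0:ℝ) 2 = Set.Icc u 2 := by
      ext x
      simp only [Set.mem_inter_iff, Set.mem_Ici, Set.mem_Ioc, Set.mem_Icc]
      constructor
      · rintro ⟨h1', h2', h3'⟩; exact ⟨h1', h3'⟩
      · rintro ⟨h1', h2'⟩; exact ⟨h1', lt_of_lt_of_le hu.1 h1', h2'⟩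
    rw [h2, integral_Icc_eq_integral_Ioc, ← intervalIntegral.integral_of_le hu.2]
    have hadd := intervalIntegral.integral_add_adjacent_intervals (hgi 0 u) (hgi u 2)
    have : F u + ∫ x in u..2, g x = F 2 := hadd
    rw [hF2] at this; linarith
  -- min representation
  have hmin : ∀ s ∈ Set.Ioc (0:ℝ) 2, ∀ t ∈ Set.Ioc (0:ℝ) 2,
      (∫ u in Set.Ioc (0:ℝ) 2, (if u ≤ s then (1:ℝ) else 0) * (if u ≤ t then 1 else 0))
        = min s t := by
    intro s hs t ht
    have h1 : ∀ u, (if u ≤ s then (1:ℝ) else 0) * (if u ≤ t then 1 else 0)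
        = (Set.Iic (min s t)).indicator (fun _ => (1:ℝ)) u := by
      intro u
      by_cases h : u ≤ s <;> by_cases h' : u ≤ t <;>
        simp [Set.indicator, h, h', le_min_iff]
    simp only [h1]
    rw [MeasureTheory.integral_indicator measurableSet_Iic,
      Measure.restrict_restrict measurableSet_Iic]
    have hm0 : 0 < min s t := lt_min hs.1 ht.1
    have hm2 : min s t ≤ 2 := le_trans (min_le_left s t) hs.2
    have h2 : Set.Iic (min s t) ∩ Set.Ioc (0:ℝ) 2 = Set.Ioc 0 (min s t) := by
      ext x
      simp only [Set.mem_inter_iff, Set.mem_Iic, Set.mem_Ioc]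
      constructor
      · rintro ⟨h1', h2', h3'⟩; exact ⟨h2', h1'⟩
      · rintro ⟨h1', h2'⟩; exact ⟨h2', h1', le_trans h2' hm2⟩
    rw [h2]
    simp [Real.volume_Ioc, ENNReal.toReal_ofReal hm0.le]
    exact ⟨hs.1.le, ht.1.le⟩
  -- a.e. membership on product
  have hprodres : ν.prod ν = (volume.prod volume).restrict
      ((Set.Ioc (0:ℝ) 2) ×ˢ (Set.Ioc (0:ℝ) 2)) := by
    rw [hν, Measure.prod_restrict]
  have hmemb : ∀ᵐ p : ℝ × ℝ ∂(ν.prod ν), p.2 ∈ Set.Ioc (0:ℝ) 2 := by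
    rw [hprodres]
    filter_upwards [ae_restrict_mem (measurableSet_Ioc.prod measurableSet_Ioc)] with p hp
    exact hp.2
  -- integrability for the first Fubini swap
  have hInt1 : ∀ s : ℝ, Integrable (Function.uncurry fun t u =>
      g t * ((if u ≤ s then (1:ℝ) else 0) * (if u ≤ t then 1 else 0))) (ν.prod ν) := by
    intro s
    have hmeas : Measurable fun p : ℝ × ℝ =>
        g p.1 * ((if p.2 ≤ s then (1:ℝ) else 0) * (if p.2 ≤ p.1 then 1 else 0)) := by
      apply (hg.comp measurable_fst).mul
      apply Measurable.mul
      · exact Measurable.ite (measurableSet_le measurable_snd measurable_const)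
          measurable_const measurable_const
      · exact Measurable.ite (measurableSet_le measurable_snd measurable_fst)
          measurable_const measurable_const
    refine (integrable_const C).mono' hmeas.aestronglyMeasurable
      (Filter.Eventually.of_forall fun p => ?_)
    have h1 : |g p.1| ≤ C := hgb p.1
    have h2 : |(if p.2 ≤ s then (1:ℝ) else 0)| ≤ 1 := by split <;> norm_num
    have h3 : |(if p.2 ≤ p.1 then (1:ℝ) else 0)| ≤ 1 := by split <;> norm_num
    show ‖g p.1 * ((if p.2 ≤ s then (1:ℝ) else 0) * (if p.2 ≤ p.1 then 1 else 0))‖ ≤ C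
    rw [Real.norm_eq_abs, abs_mul, abs_mul]
    have hbc : |(if p.2 ≤ s then (1:ℝ) else 0)| * |(if p.2 ≤ p.1 then (1:ℝ) else 0)| ≤ 1 :=
      mul_le_one₀ h2 (abs_nonneg _) h3
    calc |g p.1| * (|(if p.2 ≤ s then (1:ℝ) else 0)| * |(if p.2 ≤ p.1 then (1:ℝ) else 0)|)
        ≤ C * 1 := mul_le_mul h1 hbc (by positivity) hC0
      _ = C := mul_one C
  -- first Fubini
  have hFub1 : ∀ s ∈ Set.Ioc (0:ℝ) 2, (∫ t in Set.Ioc (0:ℝ) 2, g t * min s t)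
      = ∫ u in Set.Ioc (0:ℝ) 2, (if u ≤ s then (1:ℝ) else 0) * (- F u) := by
    intro s hs
    have step1 : (∫ t in Set.Ioc (0:ℝ) 2, g t * min s t)
        = ∫ t in Set.Ioc (0:ℝ) 2, ∫ u in Set.Ioc (0:ℝ) 2,
            g t * ((if u ≤ s then (1:ℝ) else 0) * (if u ≤ t then 1 else 0)) := by
      apply setIntegral_congr_fun measurableSet_Ioc
      intro t ht
      show g t * min s t = ∫ u in Set.Ioc (0:ℝ) 2,
        g t * ((if u ≤ s then (1:ℝ) else 0) * (if u ≤ t then 1 else 0))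
      rw [MeasureTheory.integral_const_mul, hmin s hs t ht]
    rw [step1]
    have step2 := MeasureTheory.integral_integral_swap (hInt1 s)
    rw [step2]
    apply setIntegral_congr_fun measurableSet_Ioc
    intro u hu
    have : ∀ t, g t * ((if u ≤ s then (1:ℝ) else 0) * (if u ≤ t then 1 else 0))
        = (if u ≤ s then (1:ℝ) else 0) * (g t * (if u ≤ t then 1 else 0)) := by
      intro t; ring
    simp only [this]
    rw [MeasureTheory.integral_const_mul, hJ u hu]
  -- integrability for the second Fubini swap
  have hInt2 : Integrable (Function.uncurry fun s u =>
      g s * ((if u ≤ s then (1:ℝ) else 0) * (- F u))) (ν.prod ν) := by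
    have hmeas : Measurable fun p : ℝ × ℝ =>
        g p.1 * ((if p.2 ≤ p.1 then (1:ℝ) else 0) * (- F p.2)) := by
      apply (hg.comp measurable_fst).mul
      apply Measurable.mul
      · exact Measurable.ite (measurableSet_le measurable_snd measurable_fst)
          measurable_const measurable_const
      · exact (hFc.measurable.comp measurable_snd).neg
    refine (integrable_const (C * (2 * C))).mono' hmeas.aestronglyMeasurable ?_
    filter_upwards [hmemb] with p hp
    have h1 : |g p.1| ≤ C := hgb p.1
    have h2 : |(if p.2 ≤ p.1 then (1:ℝ) else 0)| ≤ 1 := by split <;> norm_num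
    have h3 : |F p.2| ≤ 2 * C := hFb p.2 ⟨hp.1.le, hp.2⟩
    show ‖g p.1 * ((if p.2 ≤ p.1 then (1:ℝ) else 0) * (- F p.2))‖ ≤ C * (2 * C)
    rw [Real.norm_eq_abs, abs_mul, abs_mul, abs_neg]
    have hbc : |(if p.2 ≤ p.1 then (1:ℝ) else 0)| * |F p.2| ≤ 1 * (2 * C) :=
      mul_le_mul h2 h3 (abs_nonneg _) one_pos.le
    calc |g p.1| * (|(if p.2 ≤ p.1 then (1:ℝ) else 0)| * |F p.2|)
        ≤ C * (1 * (2 * C)) := mul_le_mul h1 hbc (by positivity) hC0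
      _ = C * (2 * C) := by ring
  -- second Fubini
  have hFub2 : (∫ s in Set.Ioc (0:ℝ) 2, g s *
        ∫ u in Set.Ioc (0:ℝ) 2, (if u ≤ s then (1:ℝ) else 0) * (- F u))
      = ∫ u in Set.Ioc (0:ℝ) 2, (F u) ^ 2 := by
    have step1 : (∫ s in Set.Ioc (0:ℝ) 2, g s *
          ∫ u in Set.Ioc (0:ℝ) 2, (if u ≤ s then (1:ℝ) else 0) * (- F u))
        = ∫ s in Set.Ioc (0:ℝ) 2, ∫ u in Set.Ioc (0:ℝ) 2,
            g s * ((if u ≤ s then (1:ℝ) else 0) * (- F u)) := by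
      apply setIntegral_congr_fun measurableSet_Ioc
      intro s _
      show (g s * ∫ u in Set.Ioc (0:ℝ) 2, (if u ≤ s then (1:ℝ) else 0) * (- F u))
        = ∫ u in Set.Ioc (0:ℝ) 2, g s * ((if u ≤ s then (1:ℝ) else 0) * (- F u))
      rw [MeasureTheory.integral_const_mul]
    rw [step1, MeasureTheory.integral_integral_swap hInt2]
    apply setIntegral_congr_fun measurableSet_Ioc
    intro u hu
    have : ∀ s, g s * ((if u ≤ s then (1:ℝ) else 0) * (- F u))
        = (- F u) * (g s * (if u ≤ s then 1 else 0)) := by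
      intro s; ring
    simp only [this]
    rw [MeasureTheory.integral_const_mul, hJ u hu]
    ring
  -- assembly
  have hmain : (∫ s in Set.Ioc (0:ℝ) 2, ∫ t in Set.Ioc (0:ℝ) 2, lam s * lam t * min s t)
      = ∫ u in Set.Ioc (0:ℝ) 2, (F u) ^ 2 := by
    have h' := (ae_restrict_iff' measurableSet_Ioc).mp hae
    have step1 : (∫ s in Set.Ioc (0:ℝ) 2, ∫ t in Set.Ioc (0:ℝ) 2, lam s * lam t * min s t)
        = ∫ s in Set.Ioc (0:ℝ) 2, g s * ∫ t in Set.Ioc (0:ℝ) 2, g t * min s t := by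
      apply setIntegral_congr_ae measurableSet_Ioc
      filter_upwards [h'] with s hgs hsmem
      have inner : (∫ t in Set.Ioc (0:ℝ) 2, lam s * lam t * min s t)
          = lam s * ∫ t in Set.Ioc (0:ℝ) 2, lam t * min s t := by
        rw [← MeasureTheory.integral_const_mul]
        congr 1; funext t; ring
      rw [inner, ← hgs hsmem]
      congr 1
      apply setIntegral_congr_ae measurableSet_Ioc
      filter_upwards [h'] with t hgt htmem
      rw [hgt htmem]
    rw [step1]
    have step2 : (∫ s in Set.Ioc (0:ℝ) 2, g s * ∫ t in Set.Ioc (0:ℝ) 2, g t * min s t)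
        = ∫ s in Set.Ioc (0:ℝ) 2, g s *
            ∫ u in Set.Ioc (0:ℝ) 2, (if u ≤ s then (1:ℝ) else 0) * (- F u) := by
      apply setIntegral_congr_fun measurableSet_Ioc
      intro s hs
      show (g s * ∫ t in Set.Ioc (0:ℝ) 2, g t * min s t)
        = g s * ∫ u in Set.Ioc (0:ℝ) 2, (if u ≤ s then (1:ℝ) else 0) * (- F u)
      rw [hFub1 s hs]
    rw [step2, hFub2]
  -- symmetry and normalization
  have hFint : ∀ a b : ℝ, IntervalIntegrable (fun u => (F u)^2) volume a b :=
    fun a b => ((hFc.pow 2).intervalIntegrable a b)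
  have hsym : (∫ u in (0:ℝ)..2, (F u)^2) = 2 * ∫ u in (0:ℝ)..1, (F u)^2 := by
    have hadd := intervalIntegral.integral_add_adjacent_intervals (hFint 0 1) (hFint 1 2)
    have h1 : ∫ x in (0:ℝ)..1, (F (2 - x))^2 = ∫ x in (1:ℝ)..2, (F x)^2 := by
      rw [intervalIntegral.integral_comp_sub_left (fun y => (F y)^2) 2]; norm_num
    have h2 : ∫ x in (0:ℝ)..1, (F (2 - x))^2 = ∫ x in (0:ℝ)..1, (F x)^2 := by
      apply intervalIntegral.integral_congr
      intro x hx
      rw [Set.uIcc_of_le (by norm_num : (0:ℝ) ≤ 1)] at hx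
      show (F (2 - x))^2 = (F x)^2
      rw [hFsymm x hx]
    rw [← hadd, ← h1, h2]; ring
  have hnormF : 2 * (∫ u in (0:ℝ)..1, (F u)^2) = 1 := by
    have : (∫ s in (0:ℝ)..1, (∫ u in (0:ℝ)..s, lam u) ^ 2) = ∫ u in (0:ℝ)..1, (F u)^2 := by
      apply intervalIntegral.integral_congr
      intro x hx
      rw [Set.uIcc_of_le (by norm_num : (0:ℝ) ≤ 1)] at hx
      show (∫ u in (0:ℝ)..x, lam u) ^ 2 = (F x)^2
      rw [← hcongr 0 x le_rfl (by linarith [hx.2]) hx.1]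
    rw [← this]
    exact Real.sqrt_eq_one.mp hnorm
  -- final assembly
  have goal1 : (∫ s in (0:ℝ)..2, ∫ t in (0:ℝ)..2, lam s * lam t * min s t)
      = ∫ s in Set.Ioc (0:ℝ) 2, ∫ t in Set.Ioc (0:ℝ) 2, lam s * lam t * min s t := by
    rw [intervalIntegral.integral_of_le (by norm_num : (0:ℝ) ≤ 2)]
    apply setIntegral_congr_fun measurableSet_Ioc
    intro s _
    show (∫ t in (0:ℝ)..2, lam s * lam t * min s t)
      = ∫ t in Set.Ioc (0:ℝ) 2, lam s * lam t * min s t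
    rw [intervalIntegral.integral_of_le (by norm_num : (0:ℝ) ≤ 2)]
  rw [goal1, hmain, ← intervalIntegral.integral_of_le (by norm_num : (0:ℝ) ≤ 2), hsym,
    hnormF]

end AuxPreAvg

theorem preAverage_double_integral_min_eq_one (lam : ℝ → ℝ) (hlam : IsPreAverageFn lam) :
    ∫ s in (0:ℝ)..2, ∫ t in (0:ℝ)..2, lam s * lam t * min s t = 1 := by
  obtain ⟨g, C, hC0, hg, hgb, hae⟩ := exists_rep lam hlam.piecewise_lipschitz
  exact main_aux lam g C hC0 hg hgb hae hlam.antisymm hlam.normalized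
end

section
/- In the simplified model, there are constants C > 0 and N such that for all n ≥ N and all 2 ≤ i ≤ m − 1, the covariance of pre-averaged noise on adjacent blocks satisfies |E[ε̄_{i,m} ε̄_{i+1,m}] + τ²(m/n)∫₀¹ λ(u)λ(1−u) du| ≤ C/n; that is, E[ε̄_{i,m} ε̄_{i+1,m}] = −τ²(m/n)∫₀¹ λ(u)λ(1−u) du + O(1/n) uniformly in i. -/
open MeasureTheory ProbabilityTheory Real

lemma riemann_sum_est (g : ℝ → ℝ) (M K : ℝ) (hM0 : 0 ≤ M) (hK0 : 0 ≤ K) (S : Finset ℝ)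
    (hM : ∀ x ∈ Set.Icc (0:ℝ) 1, |g x| ≤ M)
    (hLip : ∀ x y : ℝ, 0 ≤ x → x ≤ y → y ≤ 1 → (∀ s ∈ S, ¬ (x ≤ s ∧ s ≤ y)) →
      |g y - g x| ≤ K * (y - x))
    (hg : IntervalIntegrable g volume 0 1)
    (h : ℝ) (hh0 : 0 < h) (a b : ℕ) (hab : a ≤ b)
    (x : ℕ → ℝ) (hx : ∀ j k : ℕ, x k - x j = ((k : ℝ) - j) * h)
    (hxa0 : 0 ≤ x a) (hxah : x a ≤ h) (hxb1 : x b ≤ 1) (hxbh : 1 - h ≤ x b) :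
    |∑ j ∈ Finset.Icc a b, h * g (x j) - ∫ t in (0:ℝ)..1, g t| ≤
      (K + 4 * M * S.card + 3 * M) * h := by
  -- basic grid facts
  have hstep : ∀ j : ℕ, x (j + 1) = x j + h := by
    intro j
    have h1 := hx j (j + 1)
    push_cast at h1
    linarith
  have hmono : ∀ j k : ℕ, j ≤ k → x j ≤ x k := by
    intro j k hjk
    have h1 := hx j k
    have hjk' : (j : ℝ) ≤ k := by exact_mod_cast hjk
    nlinarith
  have hmem : ∀ j, a ≤ j → j ≤ b → x j ∈ Set.Icc (0:ℝ) 1 := by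
    intro j h1 h2
    exact ⟨le_trans hxa0 (hmono a j h1), le_trans (hmono j b h2) hxb1⟩
  -- integrability on subintervals
  have hsub : ∀ u v : ℝ, 0 ≤ u → u ≤ v → v ≤ 1 → IntervalIntegrable g volume u v := by
    intro u v hu huv hv
    refine hg.mono_set ?_
    rw [Set.uIcc_of_le (by norm_num : (0:ℝ) ≤ 1), Set.uIcc_of_le huv]
    exact Set.Icc_subset_Icc hu hv
  set n' := b - a with hn'
  have hban : b = a + n' := by omega
  -- cell integrability
  have hcellint : ∀ k < n', IntervalIntegrable g volume (x (a + k)) (x (a + k + 1)) := by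
    intro k hk
    exact hsub _ _ (hmem _ (by omega) (by omega)).1 (by rw [hstep]; linarith)
      (hmem _ (by omega) (by omega)).2
  -- split the integral
  have hint_mid : ∑ k ∈ Finset.range n', ∫ t in x (a + k)..x (a + k + 1), g t
      = ∫ t in x a..x b, g t := by
    have := intervalIntegral.sum_integral_adjacent_intervals (a := fun k => x (a + k))
      (μ := volume) (f := g) (n := n') (fun k hk => hcellint k hk)
    simpa [hban, add_assoc] using this
  have hint_split : ∫ t in (0:ℝ)..1, g t
      = (∫ t in (0:ℝ)..x a, g t) + (∫ t in x a..x b, g t) + ∫ t in x b..(1:ℝ), g t := by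
    have h1 : (∫ t in (0:ℝ)..x a, g t) + (∫ t in x a..x b, g t) = ∫ t in (0:ℝ)..x b, g t :=
      intervalIntegral.integral_add_adjacent_intervals
        (hsub 0 (x a) le_rfl hxa0 (hmem a le_rfl hab).2)
        (hsub _ _ hxa0 (hmono a b hab) hxb1)
    have h2 : (∫ t in (0:ℝ)..x b, g t) + (∫ t in x b..(1:ℝ), g t) = ∫ t in (0:ℝ)..1, g t :=
      intervalIntegral.integral_add_adjacent_intervals
        (hsub 0 (x b) le_rfl (hmem b hab le_rfl).1 hxb1)
        (hsub _ _ (hmem b hab le_rfl).1 hxb1 le_rfl)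
    rw [← h2, ← h1]
  -- split the sum
  have hsum_split : ∑ j ∈ Finset.Icc a b, h * g (x j)
      = (∑ k ∈ Finset.range n', h * g (x (a + k))) + h * g (x b) := by
    rw [← Finset.Ico_add_one_right_eq_Icc, Finset.sum_Ico_eq_sum_range]
    have : b + 1 - a = n' + 1 := by omega
    rw [this, Finset.sum_range_succ, hban]
  -- per-cell error bound
  have hcell : ∀ k < n',
      |h * g (x (a + k)) - ∫ t in x (a + k)..x (a + k + 1), g t|
        ≤ if ∃ s ∈ S, x (a + k) ≤ s ∧ s ≤ x (a + k + 1) then 2 * M * h else K * h * h := by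
    intro k hk
    have hu0 : (0:ℝ) ≤ x (a + k) := (hmem _ (by omega) (by omega)).1
    have hv1 : x (a + k + 1) ≤ 1 := (hmem _ (by omega) (by omega)).2
    have huv : x (a + k + 1) = x (a + k) + h := hstep _
    have hconst : h * g (x (a + k)) = ∫ t in x (a + k)..x (a + k + 1), g (x (a + k)) := by
      rw [intervalIntegral.integral_const, smul_eq_mul, huv]; ring
    rw [hconst, ← intervalIntegral.integral_sub (intervalIntegrable_const)
      (hcellint k hk)]
    have hIoc : ∀ t ∈ Set.Ioc (x (a + k)) (x (a + k + 1)), t ∈ Set.Icc (0:ℝ) 1 := by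
      intro t ht
      exact ⟨le_trans hu0 (le_of_lt ht.1), le_trans ht.2 hv1⟩
    by_cases hbad : ∃ s ∈ S, x (a + k) ≤ s ∧ s ≤ x (a + k + 1)
    · rw [if_pos hbad]
      have := intervalIntegral.norm_integral_le_of_norm_le_const
        (a := x (a + k)) (b := (x (a + k + 1))) (C := 2 * M)
        (f := fun t => g (x (a + k)) - g t) ?_
      · rw [Real.norm_eq_abs] at this
        calc |∫ t in x (a+k)..x (a+k+1), (g (x (a+k)) - g t)| ≤ 2 * M * |x (a+k+1) - x (a+k)| := this
        _ = 2 * M * h := by rw [huv]; rw [show x (a+k) + h - x (a+k) = h by ring, abs_of_pos hh0]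
      · intro t ht
        rw [Set.uIoc_of_le (by linarith)] at ht
        have ht' := hIoc t ht
        rw [Real.norm_eq_abs]
        calc |g (x (a+k)) - g t| ≤ |g (x (a+k))| + |g t| := abs_sub _ _
        _ ≤ M + M := add_le_add (hM _ ⟨hu0, by linarith⟩) (hM _ ht')
        _ = 2 * M := by ring
    · rw [if_neg hbad]
      push_neg at hbad
      have := intervalIntegral.norm_integral_le_of_norm_le_const
        (a := x (a + k)) (b := (x (a + k + 1))) (C := K * h)
        (f := fun t => g (x (a + k)) - g t) ?_
      · rw [Real.norm_eq_abs] at this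
        calc |∫ t in x (a+k)..x (a+k+1), (g (x (a+k)) - g t)| ≤ K * h * |x (a+k+1) - x (a+k)| := this
        _ = K * h * h := by rw [huv, show x (a+k) + h - x (a+k) = h by ring, abs_of_pos hh0]
      · intro t ht
        rw [Set.uIoc_of_le (by linarith)] at ht
        have ht' := hIoc t ht
        rw [Real.norm_eq_abs, abs_sub_comm]
        have : |g t - g (x (a+k))| ≤ K * (t - x (a+k)) := by
          refine hLip _ _ hu0 (le_of_lt ht.1) ht'.2 ?_
          rintro s hs ⟨hs1, hs2⟩
          exact absurd hs2 (not_le.mpr (by linarith [hbad s hs hs1, ht.2]))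
        calc |g t - g (x (a+k))| ≤ K * (t - x (a+k)) := this
        _ ≤ K * h := by
            apply mul_le_mul_of_nonneg_left _ hK0
            linarith [ht.2]
  -- count bad cells
  classical
  set Bad : Finset ℕ := (Finset.range n').filter
    (fun k => ∃ s ∈ S, x (a + k) ≤ s ∧ s ≤ x (a + k + 1)) with hBadDef
  have hBadCard : Bad.card ≤ 2 * S.card := by
    have hinner : ∀ s : ℝ, ((Finset.range n').filter
        (fun k => x (a + k) ≤ s ∧ s ≤ x (a + k + 1))).card ≤ 2 := by
      intro s
      set F := (Finset.range n').filter (fun k => x (a + k) ≤ s ∧ s ≤ x (a + k + 1)) with hF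
      rcases Finset.eq_empty_or_nonempty F with hFe | hFn
      · rw [hFe]; simp
      · set k0 := F.min' hFn with hk0
        have hsubIcc : F ⊆ Finset.Icc k0 (k0 + 1) := by
          intro k hk
          have hk0le : k0 ≤ k := Finset.min'_le F k hk
          have hkF := (Finset.mem_filter.mp hk).2
          have hk0F := (Finset.mem_filter.mp (F.min'_mem hFn)).2
          have hle : x (a + k) ≤ x (a + k0 + 1) := le_trans hkF.1 hk0F.2
          have hxx := hx (a + k0 + 1) (a + k)
          push_cast at hxx
          have hkk : (k : ℝ) ≤ (k0 : ℝ) + 1 := by nlinarith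
          have : k ≤ k0 + 1 := by exact_mod_cast hkk
          exact Finset.mem_Icc.mpr ⟨hk0le, this⟩
        calc F.card ≤ (Finset.Icc k0 (k0 + 1)).card := Finset.card_le_card hsubIcc
        _ = 2 := by rw [Nat.card_Icc]; omega
    calc Bad.card ≤ (S.biUnion (fun s => (Finset.range n').filter
          (fun k => x (a + k) ≤ s ∧ s ≤ x (a + k + 1)))).card := by
          refine Finset.card_le_card ?_
          intro k hk
          obtain ⟨hk1, s, hs, hks⟩ := Finset.mem_filter.mp hk
          exact Finset.mem_biUnion.mpr ⟨s, hs, Finset.mem_filter.mpr ⟨hk1, hks⟩⟩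
    _ ≤ ∑ s ∈ S, ((Finset.range n').filter
          (fun k => x (a + k) ≤ s ∧ s ≤ x (a + k + 1))).card := Finset.card_biUnion_le
    _ ≤ ∑ _s ∈ S, 2 := Finset.sum_le_sum fun s _ => hinner s
    _ = 2 * S.card := by rw [Finset.sum_const, smul_eq_mul, mul_comm]
  -- total length of cells
  have hn'h : (n' : ℝ) * h ≤ 1 := by
    have hxx := hx a b
    have : ((b : ℝ) - a) = (n' : ℝ) := by rw [hban]; push_cast; ring
    rw [this] at hxx
    linarith
  -- sum of per-cell errors
  have hsum_err : ∑ k ∈ Finset.range n',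
      |h * g (x (a + k)) - ∫ t in x (a + k)..x (a + k + 1), g t|
      ≤ K * h + 4 * M * S.card * h := by
    calc ∑ k ∈ Finset.range n', |h * g (x (a + k)) - ∫ t in x (a + k)..x (a + k + 1), g t|
        ≤ ∑ k ∈ Finset.range n', (if ∃ s ∈ S, x (a + k) ≤ s ∧ s ≤ x (a + k + 1)
            then 2 * M * h else K * h * h) :=
          Finset.sum_le_sum fun k hk => hcell k (Finset.mem_range.mp hk)
    _ = ∑ k ∈ Bad, (2 * M * h) + ∑ k ∈ (Finset.range n').filter
          (fun k => ¬ ∃ s ∈ S, x (a + k) ≤ s ∧ s ≤ x (a + k + 1)), (K * h * h) := by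
          rw [Finset.sum_ite]
    _ ≤ 2 * S.card * (2 * M * h) + (n' : ℝ) * (K * h * h) := by
          gcongr
          · rw [Finset.sum_const, nsmul_eq_mul]
            have hc : (Bad.card : ℝ) ≤ 2 * S.card := by exact_mod_cast hBadCard
            have : (0:ℝ) ≤ 2 * M * h := by positivity
            nlinarith
          · rw [Finset.sum_const, nsmul_eq_mul]
            have hc : ((Finset.range n').filter
                (fun k => ¬ ∃ s ∈ S, x (a + k) ≤ s ∧ s ≤ x (a + k + 1))).card ≤ n' := by
              calc _ ≤ (Finset.range n').card := Finset.card_le_card (Finset.filter_subset _ _)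
              _ = n' := Finset.card_range n'
            have hc' : (((Finset.range n').filter
                (fun k => ¬ ∃ s ∈ S, x (a + k) ≤ s ∧ s ≤ x (a + k + 1))).card : ℝ) ≤ n' := by
              exact_mod_cast hc
            have : (0:ℝ) ≤ K * h * h := by positivity
            nlinarith
    _ ≤ 4 * M * S.card * h + K * h := by
          have : (n' : ℝ) * (K * h * h) = K * h * ((n':ℝ) * h) := by ring
          rw [this]
          have h1 : K * h * ((n':ℝ) * h) ≤ K * h * 1 :=
            mul_le_mul_of_nonneg_left hn'h (by positivity)
          have h2 : (2:ℝ) * S.card * (2 * M * h) = 4 * M * S.card * h := by ring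
          linarith
    _ = K * h + 4 * M * S.card * h := by ring
  -- boundary terms
  have hbd1 : |∫ t in (0:ℝ)..x a, g t| ≤ M * h := by
    have := intervalIntegral.norm_integral_le_of_norm_le_const (a := (0:ℝ)) (b := x a)
      (C := M) (f := g) ?_
    · rw [Real.norm_eq_abs] at this
      calc |∫ t in (0:ℝ)..x a, g t| ≤ M * |x a - 0| := this
      _ ≤ M * h := by
          rw [sub_zero, abs_of_nonneg hxa0]
          exact mul_le_mul_of_nonneg_left hxah hM0
    · intro t ht
      rw [Set.uIoc_of_le hxa0] at ht
      exact hM t ⟨le_of_lt ht.1, le_trans ht.2 (hmem a le_rfl hab).2⟩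
  have hbd2 : |h * g (x b) - ∫ t in x b..(1:ℝ), g t| ≤ 2 * M * h := by
    have hMb : |g (x b)| ≤ M := hM _ (hmem b hab le_rfl)
    have h1 : |h * g (x b)| ≤ h * M := by
      rw [abs_mul, abs_of_pos hh0]
      exact mul_le_mul_of_nonneg_left hMb (le_of_lt hh0)
    have h2 : |∫ t in x b..(1:ℝ), g t| ≤ M * h := by
      have := intervalIntegral.norm_integral_le_of_norm_le_const (a := x b) (b := (1:ℝ))
        (C := M) (f := g) ?_
      · rw [Real.norm_eq_abs] at this
        calc |∫ t in x b..(1:ℝ), g t| ≤ M * |1 - x b| := this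
        _ ≤ M * h := by
            rw [abs_of_nonneg (by linarith)]
            exact mul_le_mul_of_nonneg_left (by linarith) hM0
      · intro t ht
        rw [Set.uIoc_of_le hxb1] at ht
        exact hM t ⟨le_trans (hmem b hab le_rfl).1 (le_of_lt ht.1), ht.2⟩
    calc |h * g (x b) - ∫ t in x b..(1:ℝ), g t| ≤ |h * g (x b)| + |∫ t in x b..(1:ℝ), g t| :=
        abs_sub _ _
    _ ≤ h * M + M * h := add_le_add h1 h2
    _ = 2 * M * h := by ring
  -- assemble
  have key : ∑ j ∈ Finset.Icc a b, h * g (x j) - ∫ t in (0:ℝ)..1, g t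
      = (∑ k ∈ Finset.range n', (h * g (x (a + k)) - ∫ t in x (a + k)..x (a + k + 1), g t))
        + (h * g (x b) - ∫ t in x b..(1:ℝ), g t) - ∫ t in (0:ℝ)..x a, g t := by
    rw [hsum_split, hint_split, Finset.sum_sub_distrib, hint_mid]
    ring
  rw [key]
  calc |_| ≤ |∑ k ∈ Finset.range n', (h * g (x (a + k)) - ∫ t in x (a + k)..x (a + k + 1), g t)|
        + |h * g (x b) - ∫ t in x b..(1:ℝ), g t| + |∫ t in (0:ℝ)..x a, g t| := by
        apply (abs_sub _ _).trans
        gcongr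
        exact abs_add_le _ _
  _ ≤ (K * h + 4 * M * S.card * h) + 2 * M * h + M * h := by
        gcongr
        exact (Finset.abs_sum_le_sum_abs _ _).trans hsum_err
  _ = (K + 4 * M * S.card + 3 * M) * h := by ring

section lamAux
variable {lam : ℝ → ℝ} {Np : ℕ} {t : ℕ → ℝ} {Kl : NNReal}

lemma tt_mono (htmono : ∀ i < Np, t i < t (i + 1)) :
    ∀ i j, i ≤ j → j ≤ Np → t i ≤ t j := by
  intro i j hij hj
  induction j with
  | zero =>
    have : i = 0 := by omega
    subst this; rfl
  | succ k ih =>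
    rcases Nat.lt_or_ge i (k + 1) with hlt | hge
    · exact le_trans (ih (by omega) (by omega)) (le_of_lt (htmono k (by omega)))
    · have : i = k + 1 := by omega
      subst this; rfl

lemma locate_piece (ht0 : t 0 = 0) (ht2 : t Np = 2) :
    ∀ x ∈ Set.Icc (0:ℝ) 2, (∃ i ≤ Np, t i = x) ∨
      ∃ i < Np, x ∈ Set.Ioo (t i) (t (i + 1)) := by
  classical
  intro x hx
  set i := Nat.findGreatest (fun i => t i ≤ x) Np with hi
  have hti : t i ≤ x :=
    Nat.findGreatest_spec (P := fun i => t i ≤ x) (Nat.zero_le Np)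
      (show t 0 ≤ x by rw [ht0]; exact hx.1)
  have hiN : i ≤ Np := Nat.findGreatest_le Np
  rcases eq_or_lt_of_le hti with heq | hlt
  · exact Or.inl ⟨i, hiN, heq⟩
  · right
    have hiNlt : i < Np := by
      rcases eq_or_lt_of_le hiN with h' | h'
      · exfalso; rw [h', ht2] at hlt; exact absurd hx.2 (not_le.mpr hlt)
      · exact h'
    have h2 : ¬ t (i + 1) ≤ x :=
      Nat.findGreatest_is_greatest (Nat.lt_succ_self i) (by omega)
    exact ⟨i, hiNlt, hlt, not_le.mp h2⟩

lemma lam_bounded (ht0 : t 0 = 0) (ht2 : t Np = 2)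
    (htmono : ∀ i < Np, t i < t (i + 1))
    (htlip : ∀ i < Np, LipschitzOnWith Kl lam (Set.Ioo (t i) (t (i + 1)))) :
    ∃ M : ℝ, 1 ≤ M ∧ ∀ x ∈ Set.Icc (0:ℝ) 2, |lam x| ≤ M := by
  classical
  have hne : (Finset.range (Np + 1)).Nonempty := ⟨0, by simp⟩
  set f : ℕ → ℝ := fun i => max (|lam (t i)|) (|lam ((t i + t (i + 1)) / 2)| + 2 * (Kl:ℝ))
    with hf
  set M0 := (Finset.range (Np + 1)).sup' hne f with hM0
  refine ⟨max M0 1, le_max_right _ _, ?_⟩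
  intro x hx
  rcases locate_piece ht0 ht2 x hx with ⟨i, hiN, hti⟩ | ⟨i, hiN, hmem⟩
  · subst hti
    have h1 : f i ≤ M0 := Finset.le_sup' f (by simp [Nat.lt_succ_of_le hiN])
    have h2 : |lam (t i)| ≤ f i := le_max_left _ _
    exact (h2.trans h1).trans (le_max_left _ _)
  · set p := (t i + t (i + 1)) / 2 with hp
    obtain ⟨ha, hb⟩ := hmem
    have hplt : p ∈ Set.Ioo (t i) (t (i + 1)) := by
      constructor
      · simp only [hp]; linarith [htmono i hiN]
      · simp only [hp]; linarith [htmono i hiN]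
    have hdist := (htlip i hiN).dist_le_mul x ⟨ha, hb⟩ p hplt
    rw [Real.dist_eq, Real.dist_eq] at hdist
    have hlen : t (i + 1) - t i ≤ 2 := by
      have h1 : (0:ℝ) ≤ t i := by
        rw [← ht0]; exact tt_mono htmono 0 i (Nat.zero_le i) (le_of_lt hiN)
      have h2 : t (i + 1) ≤ 2 := by rw [← ht2]; exact tt_mono htmono (i + 1) Np hiN le_rfl
      linarith
    have hxp : |x - p| ≤ 2 := by
      rw [abs_le]; constructor
      · simp only [hp]; linarith
      · simp only [hp]; linarith
    have hKxp : (Kl:ℝ) * |x - p| ≤ (Kl:ℝ) * 2 := mul_le_mul_of_nonneg_left hxp Kl.2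
    have habs : |lam x| ≤ |lam x - lam p| + |lam p| := by
      calc |lam x| = |(lam x - lam p) + lam p| := by ring_nf
      _ ≤ |lam x - lam p| + |lam p| := abs_add_le _ _
    have hfin : |lam x| ≤ |lam p| + 2 * (Kl:ℝ) := by linarith
    have h1 : f i ≤ M0 := Finset.le_sup' f (by simp [Nat.lt_succ_of_le (le_of_lt hiN)])
    have h2 : |lam p| + 2 * (Kl:ℝ) ≤ f i := le_max_right _ _
    calc |lam x| ≤ |lam p| + 2 * (Kl:ℝ) := hfin
    _ ≤ M0 := h2.trans h1
    _ ≤ max M0 1 := le_max_left _ _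

lemma lam_lip_avoid (ht0 : t 0 = 0) (ht2 : t Np = 2)
    (htlip : ∀ i < Np, LipschitzOnWith Kl lam (Set.Ioo (t i) (t (i + 1)))) :
    ∀ x y : ℝ, 0 ≤ x → x ≤ y → y ≤ 2 → (∀ i ≤ Np, ¬ (x ≤ t i ∧ t i ≤ y)) →
      |lam y - lam x| ≤ (Kl:ℝ) * (y - x) := by
  intro x y hx0 hxy hy2 havoid
  rcases locate_piece ht0 ht2 x ⟨hx0, le_trans hxy hy2⟩ with ⟨i, hiN, hti⟩ | ⟨i, hiN, hmem⟩
  · exact absurd ⟨le_of_eq hti.symm, hti.symm ▸ hxy⟩ (havoid i hiN)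
  · have hylt : y < t (i + 1) := by
      by_contra hcon
      push_neg at hcon
      exact havoid (i + 1) (by omega) ⟨le_of_lt hmem.2, hcon⟩
    have hymem : y ∈ Set.Ioo (t i) (t (i + 1)) := ⟨lt_of_lt_of_le hmem.1 hxy, hylt⟩
    have hdist := (htlip i hiN).dist_le_mul y hymem x hmem
    rw [Real.dist_eq, Real.dist_eq] at hdist
    calc |lam y - lam x| ≤ (Kl:ℝ) * |y - x| := hdist
    _ = (Kl:ℝ) * (y - x) := by rw [abs_of_nonneg (by linarith)]

lemma g_lip_avoid (ht0 : t 0 = 0) (ht2 : t Np = 2)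
    (htlip : ∀ i < Np, LipschitzOnWith Kl lam (Set.Ioo (t i) (t (i + 1))))
    (M : ℝ) (hM : ∀ x ∈ Set.Icc (0:ℝ) 2, |lam x| ≤ M) :
    ∀ x y : ℝ, 0 ≤ x → x ≤ y → y ≤ 1 →
      (∀ s ∈ ((Finset.range (Np + 1)).image t ∪
        (Finset.range (Np + 1)).image (fun i => 1 - t i)), ¬ (x ≤ s ∧ s ≤ y)) →
      |lam y * lam (1 - y) - lam x * lam (1 - x)| ≤ (2 * M * Kl) * (y - x) := by
  classical
  intro x y hx0 hxy hy1 havoid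
  have havoid1 : ∀ i ≤ Np, ¬ (x ≤ t i ∧ t i ≤ y) := by
    intro i hi
    exact havoid (t i) (Finset.mem_union_left _
      (Finset.mem_image_of_mem t (Finset.mem_range.mpr (by omega))))
  have havoid2 : ∀ i ≤ Np, ¬ (1 - y ≤ t i ∧ t i ≤ 1 - x) := by
    intro i hi hcon
    exact havoid (1 - t i) (Finset.mem_union_right _
      (Finset.mem_image_of_mem _ (Finset.mem_range.mpr (by omega))))
      ⟨by linarith [hcon.2], by linarith [hcon.1]⟩
  have h1 : |lam y - lam x| ≤ (Kl:ℝ) * (y - x) :=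
    lam_lip_avoid ht0 ht2 htlip x y hx0 hxy (by linarith) havoid1
  have h2 : |lam (1 - x) - lam (1 - y)| ≤ (Kl:ℝ) * ((1 - x) - (1 - y)) :=
    lam_lip_avoid ht0 ht2 htlip (1 - y) (1 - x) (by linarith) (by linarith) (by linarith)
      havoid2
  have hMy : |lam y| ≤ M := hM y ⟨by linarith, by linarith⟩
  have hM1x : |lam (1 - x)| ≤ M := hM (1 - x) ⟨by linarith, by linarith⟩
  have hM0 : 0 ≤ M := le_trans (abs_nonneg _) hMy
  have key : lam y * lam (1 - y) - lam x * lam (1 - x)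
      = lam y * (lam (1 - y) - lam (1 - x)) + lam (1 - x) * (lam y - lam x) := by ring
  rw [key]
  calc |lam y * (lam (1 - y) - lam (1 - x)) + lam (1 - x) * (lam y - lam x)|
      ≤ |lam y * (lam (1 - y) - lam (1 - x))| + |lam (1 - x) * (lam y - lam x)| := abs_add_le _ _
  _ = |lam y| * |lam (1 - y) - lam (1 - x)| + |lam (1 - x)| * |lam y - lam x| := by
      rw [abs_mul, abs_mul]
  _ ≤ M * ((Kl:ℝ) * (y - x)) + M * ((Kl:ℝ) * (y - x)) := by
      have e1 : |lam (1 - y) - lam (1 - x)| ≤ (Kl:ℝ) * (y - x) := by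
        rw [abs_sub_comm]
        calc |lam (1 - x) - lam (1 - y)| ≤ (Kl:ℝ) * ((1 - x) - (1 - y)) := h2
        _ = (Kl:ℝ) * (y - x) := by ring_nf
      have e2 := h1
      have n1 : (0:ℝ) ≤ |lam (1 - y) - lam (1 - x)| := abs_nonneg _
      have n2 : (0:ℝ) ≤ |lam y - lam x| := abs_nonneg _
      have n3 : (0:ℝ) ≤ (Kl:ℝ) * (y - x) := mul_nonneg Kl.2 (by linarith)
      nlinarith [abs_nonneg (lam y), abs_nonneg (lam (1 - x))]
  _ = (2 * M * Kl) * (y - x) := by ring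

lemma g_integrable (ht0 : t 0 = 0) (ht2 : t Np = 2)
    (htlip : ∀ i < Np, LipschitzOnWith Kl lam (Set.Ioo (t i) (t (i + 1))))
    (M : ℝ) (hM : ∀ x ∈ Set.Icc (0:ℝ) 2, |lam x| ≤ M) :
    IntervalIntegrable (fun u => lam u * lam (1 - u)) volume 0 1 := by
  have hMM : ∀ z : ℝ, z ∈ Set.Icc (0:ℝ) 1 → |lam z * lam (1 - z)| ≤ M * M := by
    intro z hz
    rw [abs_mul]
    have h1 : |lam z| ≤ M := hM z ⟨hz.1, by linarith [hz.2]⟩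
    have h2 : |lam (1 - z)| ≤ M := hM (1 - z) ⟨by linarith [hz.2], by linarith [hz.1]⟩
    exact mul_le_mul h1 h2 (abs_nonneg _) (le_trans (abs_nonneg _) h1)
  classical
  set S : Finset ℝ := (Finset.range (Np + 1)).image t ∪
    (Finset.range (Np + 1)).image (fun i => 1 - t i) with hS
  set g : ℝ → ℝ := fun u => lam u * lam (1 - u) with hg
  set A : Set ℝ := Set.Icc (0:ℝ) 1 \ (S : Set ℝ) with hA
  have hAmeas : MeasurableSet A := measurableSet_Icc.diff (S.finite_toSet.measurableSet)
  have hcont : ContinuousOn g A := by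
    intro z hz
    obtain ⟨hz1, hz2⟩ := hz
    have hznb : ∀ i ≤ Np, t i ≠ z := by
      intro i hi hcon
      exact hz2 (Finset.mem_coe.mpr (Finset.mem_union_left _
        (hcon ▸ Finset.mem_image_of_mem t (Finset.mem_range.mpr (by omega)))))
    have hznb2 : ∀ i ≤ Np, t i ≠ 1 - z := by
      intro i hi hcon
      refine hz2 (Finset.mem_coe.mpr (Finset.mem_union_right _ ?_))
      refine Finset.mem_image.mpr ⟨i, Finset.mem_range.mpr (by omega), by linarith⟩
    have hc1 : ContinuousAt lam z := by
      rcases locate_piece ht0 ht2 z ⟨hz1.1, by linarith [hz1.2]⟩ with ⟨i, hi, hti⟩ | ⟨i, hi, hmem⟩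
      · exact absurd hti (hznb i hi)
      · exact ((htlip i hi).continuousOn.continuousAt (isOpen_Ioo.mem_nhds hmem))
    have hc2 : ContinuousAt lam (1 - z) := by
      rcases locate_piece ht0 ht2 (1 - z) ⟨by linarith [hz1.2], by linarith [hz1.1]⟩ with
        ⟨i, hi, hti⟩ | ⟨i, hi, hmem⟩
      · exact absurd hti (hznb2 i hi)
      · exact ((htlip i hi).continuousOn.continuousAt (isOpen_Ioo.mem_nhds hmem))
    have : ContinuousAt g z := by
      have : ContinuousAt (fun u => lam (1 - u)) z :=
        ContinuousAt.comp (by simpa using hc2) (by fun_prop)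
      exact ContinuousAt.mul hc1 this
    exact this.continuousWithinAt
  have haem : AEMeasurable g (volume.restrict A) := hcont.aemeasurable hAmeas
  have hAe : A =ᵐ[volume] Set.Icc (0:ℝ) 1 := by
    rw [hA]
    refine MeasureTheory.diff_ae_eq_self.mpr ?_
    exact measure_mono_null Set.inter_subset_right (S.finite_toSet.measure_zero _)
  have haem2 : AEMeasurable g (volume.restrict (Set.Icc (0:ℝ) 1)) := by
    rwa [Measure.restrict_congr_set hAe] at haem
  have hint : IntegrableOn g (Set.Icc (0:ℝ) 1) volume := by
    refine Integrable.mono' (g := fun _ => M * M)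
      (integrableOn_const measure_Icc_lt_top.ne) haem2.aestronglyMeasurable ?_
    refine (ae_restrict_iff' measurableSet_Icc).mpr (MeasureTheory.ae_of_all _ ?_)
    intro z hz
    rw [Real.norm_eq_abs]
    exact hMM z hz
  exact (intervalIntegrable_iff_integrableOn_Icc_of_le (by norm_num)).mpr hint

end lamAux

lemma expect_prod_sums {Ω : Type*} [MeasureSpace Ω] [IsProbabilityMeasure (ℙ : Measure Ω)]
    (n : ℕ) (η : ℕ → Ω → ℝ) (hmeas : ∀ j, Measurable (η j))
    (hcov : ∀ j l, j ≤ n → l ≤ n → ∫ ω, η j ω * η l ω = if j = l then 1 else 0)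
    (s u : Finset ℕ) (hs : ∀ j ∈ s, j ≤ n) (hu : ∀ l ∈ u, l ≤ n) (cf d : ℕ → ℝ) :
    ∫ ω, (∑ j ∈ s, cf j * η j ω) * (∑ l ∈ u, d l * η l ω)
      = ∑ j ∈ s ∩ u, cf j * d j := by
  classical
  have hint2 : ∀ j, j ≤ n → Integrable (fun ω => η j ω * η j ω) := by
    intro j hj
    by_contra hcon
    have h0 := integral_undef hcon
    rw [hcov j j hj hj] at h0
    simp at h0
  have hintjl : ∀ j l, j ≤ n → l ≤ n → Integrable (fun ω => η j ω * η l ω) := by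
    intro j l hj hl
    refine Integrable.mono' ((hint2 j hj).add (hint2 l hl))
      (((hmeas j).mul (hmeas l)).aestronglyMeasurable) (ae_of_all _ ?_)
    intro ω
    rw [Real.norm_eq_abs]
    simp only [Pi.add_apply]
    nlinarith [sq_nonneg (|η j ω| - |η l ω|), sq_abs (η j ω), sq_abs (η l ω),
      abs_mul (η j ω) (η l ω), abs_nonneg (η j ω), abs_nonneg (η l ω),
      le_abs_self (η j ω * η l ω)]
  have hterm : ∀ j ∈ s, ∀ l ∈ u,
      Integrable (fun ω => (cf j * η j ω) * (d l * η l ω)) := by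
    intro j hj l hl
    have heq : (fun ω => (cf j * η j ω) * (d l * η l ω))
        = fun ω => (cf j * d l) * (η j ω * η l ω) := by ext ω; ring
    rw [heq]
    exact (hintjl j l (hs j hj) (hu l hl)).const_mul _
  calc ∫ ω, (∑ j ∈ s, cf j * η j ω) * (∑ l ∈ u, d l * η l ω)
      = ∫ ω, ∑ j ∈ s, ∑ l ∈ u, (cf j * η j ω) * (d l * η l ω) := by
        congr 1; ext ω; rw [Finset.sum_mul_sum]
  _ = ∑ j ∈ s, ∫ ω, ∑ l ∈ u, (cf j * η j ω) * (d l * η l ω) :=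
        integral_finset_sum s fun j hj => integrable_finset_sum u fun l hl => hterm j hj l hl
  _ = ∑ j ∈ s, ∑ l ∈ u, ∫ ω, (cf j * η j ω) * (d l * η l ω) :=
        Finset.sum_congr rfl fun j hj => integral_finset_sum u fun l hl => hterm j hj l hl
  _ = ∑ j ∈ s, ∑ l ∈ u, (cf j * d l) * (if j = l then (1:ℝ) else 0) := by
        refine Finset.sum_congr rfl fun j hj => Finset.sum_congr rfl fun l hl => ?_
        have heq : (fun ω => (cf j * η j ω) * (d l * η l ω))
            = fun ω => (cf j * d l) * (η j ω * η l ω) := by ext ω; ring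
        rw [heq, integral_const_mul, hcov j l (hs j hj) (hu l hl)]
  _ = ∑ j ∈ s, (if j ∈ u then cf j * d j else 0) := by
        refine Finset.sum_congr rfl fun j hj => ?_
        rw [← Finset.sum_ite_eq u j (fun l => cf j * d l)]
        refine Finset.sum_congr rfl fun l hl => ?_
        by_cases h : j = l
        · subst h; simp
        · simp [h]
  _ = ∑ j ∈ s ∩ u, cf j * d j := Finset.sum_ite_mem s u _
set_option maxHeartbeats 1600000 in
theorem preAveragedNoise_adjacent_covariance (σ τ c : ℝ) (hσ : 0 < σ) (hτ : 0 < τ) (hc : 0 < c)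
    (lam : ℝ → ℝ) (hlam : IsPreAverageFn lam)
    (Ω : ℕ → Type*) [∀ n, MeasureSpace (Ω n)] [∀ n, IsProbabilityMeasure (ℙ : Measure (Ω n))]
    (W η : (n : ℕ) → ℕ → Ω n → ℝ)
    (hmodel : ∀ n, IsSimplifiedModel n (W n) (η n)) :
    ∃ C > 0, ∃ N : ℕ, ∀ n ≥ N, ∀ i : ℕ, 2 ≤ i → i + 1 ≤ mOf c n →
      |(∫ ω, preAvg lam n (mOf c n) (fun j ω => τ * η n j ω) i ω *
             preAvg lam n (mOf c n) (fun j ω => τ * η n j ω) (i + 1) ω)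
          + τ ^ 2 * ((mOf c n : ℝ) / n) * ∫ u in (0:ℝ)..1, lam u * lam (1 - u)| ≤ C / n := by
  classical
  obtain ⟨Np, t, Kl, hNp, ht0, ht2, htmono, htlip⟩ := hlam.piecewise_lipschitz
  obtain ⟨M, hM1, hMb⟩ := lam_bounded ht0 ht2 htmono htlip
  set S : Finset ℝ := (Finset.range (Np + 1)).image t ∪
    (Finset.range (Np + 1)).image (fun i => 1 - t i) with hS
  set g : ℝ → ℝ := fun u => lam u * lam (1 - u) with hgdef
  have hM0 : (0:ℝ) ≤ M := le_trans zero_le_one hM1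
  have hgM : ∀ x ∈ Set.Icc (0:ℝ) 1, |g x| ≤ M * M := by
    intro z hz
    rw [hgdef, abs_mul]
    have h1 : |lam z| ≤ M := hMb z ⟨hz.1, by linarith [hz.2]⟩
    have h2 : |lam (1 - z)| ≤ M := hMb (1 - z) ⟨by linarith [hz.2], by linarith [hz.1]⟩
    exact mul_le_mul h1 h2 (abs_nonneg _) hM0
  have hgLip : ∀ x y : ℝ, 0 ≤ x → x ≤ y → y ≤ 1 → (∀ s ∈ S, ¬ (x ≤ s ∧ s ≤ y)) →
      |g y - g x| ≤ (2 * M * Kl) * (y - x) :=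
    fun x y hx hxy hy hav => g_lip_avoid ht0 ht2 htlip M hMb x y hx hxy hy hav
  have hgint : IntervalIntegrable g volume 0 1 := g_integrable ht0 ht2 htlip M hMb
  set CR : ℝ := (2 * M * Kl) + 4 * (M * M) * S.card + 3 * (M * M) with hCR
  have hCRpos : 0 < CR := by
    have h1 : (0:ℝ) ≤ 2 * M * Kl := by positivity
    have h2 : (0:ℝ) ≤ 4 * (M * M) * S.card := by positivity
    nlinarith
  refine ⟨τ ^ 2 * CR * (4 * c ^ 2), by positivity, ⌈(max (2 * c) (1 / c)) ^ 2⌉₊ + 1, ?_⟩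
  intro n hn i hi2 him
  set m := mOf c n with hm
  -- basic bounds on n and m
  have hmaxpos : 0 < max (2 * c) (1 / c) := lt_max_of_lt_left (by positivity)
  have hsq : ((max (2 * c) (1 / c)) ^ 2 : ℝ) ≤ n := by
    have h1 : (⌈(max (2 * c) (1 / c)) ^ 2⌉₊ : ℝ) ≤ n := by
      have : ⌈(max (2 * c) (1 / c)) ^ 2⌉₊ ≤ n := by omega
      exact_mod_cast this
    exact le_trans (Nat.le_ceil _) h1
  have hsqrt : max (2 * c) (1 / c) ≤ Real.sqrt n := by
    rw [show max (2 * c) (1 / c) = Real.sqrt ((max (2 * c) (1 / c)) ^ 2) by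
      rw [Real.sqrt_sq (le_of_lt hmaxpos)]]
    exact Real.sqrt_le_sqrt hsq
  have h2c : 2 * c ≤ Real.sqrt n := le_trans (le_max_left _ _) hsqrt
  have h1c : 1 / c ≤ Real.sqrt n := le_trans (le_max_right _ _) hsqrt
  have hsn0 : 0 < Real.sqrt n := lt_of_lt_of_le (by positivity) h2c
  have hnR : (0:ℝ) < n := by
    have := Real.sq_sqrt (by positivity : (0:ℝ) ≤ (n:ℝ))
    nlinarith
  have hn1 : 1 ≤ n := by exact_mod_cast Nat.one_le_cast.mpr (by exact_mod_cast hnR)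
  set k := ⌊Real.sqrt n / c⌋₊ with hk
  have hkc : Real.sqrt n / c - 1 < (k : ℝ) := Nat.sub_one_lt_floor _
  have hsc2 : 1 ≤ Real.sqrt n / (2 * c) := by
    rw [le_div_iff₀ (by positivity)]
    linarith
  have hklo : Real.sqrt n / (2 * c) ≤ (k : ℝ) := by
    have : Real.sqrt n / c - Real.sqrt n / (2 * c) = Real.sqrt n / (2 * c) := by
      field_simp; ring
    nlinarith
  have hkpos : 0 < k := by
    have : (0:ℝ) < (k:ℝ) := lt_of_lt_of_le (by positivity) hklo
    exact_mod_cast this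
  have hkn : k ≤ n := by
    have h1 : Real.sqrt n / c ≤ (n : ℝ) := by
      have h2 : Real.sqrt n / c = Real.sqrt n * (1 / c) := by ring
      have h3 : Real.sqrt n * (1 / c) ≤ Real.sqrt n * Real.sqrt n :=
        mul_le_mul_of_nonneg_left h1c (le_of_lt hsn0)
      rw [Real.mul_self_sqrt (by positivity)] at h3
      linarith [h2 ▸ h3]
    calc k = ⌊Real.sqrt n / c⌋₊ := rfl
    _ ≤ ⌊(n:ℝ)⌋₊ := Nat.floor_le_floor h1
    _ = n := Nat.floor_natCast n
  have hm1 : 1 ≤ m := by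
    rw [hm, mOf, ← hk]
    exact Nat.one_le_div_iff hkpos |>.mpr hkn
  have hmn : m ≤ n := by rw [hm, mOf]; exact Nat.div_le_self _ _
  have hmR : (0:ℝ) < m := by exact_mod_cast hm1
  have hmlen : (m : ℝ) ≤ 2 * c * Real.sqrt n := by
    have h1 : (m : ℝ) ≤ (n : ℝ) / k := by
      rw [hm, mOf, ← hk]; exact Nat.cast_div_le
    have h2 : (n : ℝ) / k ≤ (n : ℝ) / (Real.sqrt n / (2 * c)) := by
      apply div_le_div_of_nonneg_left (by positivity) (by positivity) hklo
    have h3 : (n : ℝ) / (Real.sqrt n / (2 * c)) = 2 * c * ((n:ℝ) / Real.sqrt n) := by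
      rw [div_div_eq_mul_div]; ring
    have h4 : (n : ℝ) / Real.sqrt n = Real.sqrt n := Real.div_sqrt
    rw [h3, h4] at h2
    linarith
  set hh := (m : ℝ) / n with hhdef
  have hh0 : 0 < hh := by positivity
  have hh1 : hh ≤ 1 := by
    rw [hhdef, div_le_one hnR]
    exact_mod_cast hmn
  -- cast facts about i
  have hi2R : (2:ℝ) ≤ (i:ℝ) := by exact_mod_cast hi2
  have himR : (i:ℝ) + 1 ≤ (m:ℝ) := by exact_mod_cast him
  -- grid
  set a := ⌈((i:ℝ) - 1) * n / m⌉₊ with ha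
  set b := ⌊(i:ℝ) * n / m⌋₊ with hb
  set x : ℕ → ℝ := fun j => (j : ℝ) * hh - ((i:ℝ) - 1) with hxdef
  have hxjk : ∀ j k' : ℕ, x k' - x j = ((k' : ℝ) - j) * hh := by
    intro j k'; simp only [hxdef]; ring
  have hi1R : (0:ℝ) ≤ (i:ℝ) - 1 := by linarith
  have harg0 : (0:ℝ) ≤ ((i:ℝ) - 1) * n / m := by positivity
  have hxa0 : 0 ≤ x a := by
    have h1 : ((i:ℝ) - 1) * n / m ≤ (a : ℝ) := Nat.le_ceil _
    have h1' : ((i:ℝ) - 1) * n ≤ (a:ℝ) * m := by rwa [div_le_iff₀ hmR] at h1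
    have e : (a:ℝ) * ((m:ℝ)/n) - ((i:ℝ) - 1) = ((a:ℝ) * m - ((i:ℝ) - 1) * n) / n := by
      field_simp
    simp only [hxdef, hhdef]
    rw [e]
    exact div_nonneg (by linarith) hnR.le
  have hxah : x a ≤ hh := by
    have h1 : (a : ℝ) < ((i:ℝ) - 1) * n / m + 1 := Nat.ceil_lt_add_one harg0
    have h0 : (a:ℝ) - 1 < ((i:ℝ) - 1) * n / m := by linarith
    have h1'' := mul_lt_mul_of_pos_right h0 hmR
    rw [div_mul_cancel₀ _ (ne_of_gt hmR)] at h1''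
    have h1' : (a:ℝ) * m ≤ ((i:ℝ) - 1) * n + m := by nlinarith
    have e : (a:ℝ) * ((m:ℝ)/n) - ((i:ℝ) - 1) = ((a:ℝ) * m - ((i:ℝ) - 1) * n) / n := by
      field_simp
    simp only [hxdef, hhdef]
    rw [e]
    exact (div_le_div_iff_of_pos_right hnR).mpr (by linarith)
  have hargb0 : (0:ℝ) ≤ (i:ℝ) * n / m := by positivity
  have hxb1 : x b ≤ 1 := by
    have h1 : (b : ℝ) ≤ (i:ℝ) * n / m := Nat.floor_le hargb0
    have h1' : (b:ℝ) * m ≤ (i:ℝ) * n := by rwa [← le_div_iff₀ hmR]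
    have e : (b:ℝ) * ((m:ℝ)/n) - ((i:ℝ) - 1) = ((b:ℝ) * m - ((i:ℝ) - 1) * n) / n := by
      field_simp
    simp only [hxdef, hhdef]
    rw [e, div_le_one hnR]
    nlinarith
  have hxbh : 1 - hh ≤ x b := by
    have h1 : (i:ℝ) * n / m - 1 < (b : ℝ) := Nat.sub_one_lt_floor _
    have h1'' : (i:ℝ) * n / m < (b:ℝ) + 1 := by linarith
    have h1' : (i:ℝ) * n ≤ (b:ℝ) * m + m := by
      rw [div_lt_iff₀ hmR] at h1''
      nlinarith
    have e : (b:ℝ) * ((m:ℝ)/n) - ((i:ℝ) - 1) = ((b:ℝ) * m - ((i:ℝ) - 1) * n) / n := by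
      field_simp
    have e2 : 1 - (m:ℝ)/n = ((n:ℝ) - m)/n := by rw [one_sub_div (ne_of_gt hnR)]
    simp only [hxdef, hhdef]
    rw [e, e2]
    exact (div_le_div_iff_of_pos_right hnR).mpr (by nlinarith)
  have hnmr : (1:ℝ) ≤ (n:ℝ) / m := by
    rw [le_div_iff₀ hmR]
    have : (m:ℝ) ≤ n := by exact_mod_cast hmn
    linarith
  have hab : a ≤ b := by
    rw [ha, Nat.ceil_le]
    have h1 : ((i:ℝ) - 1) * n / m + 1 ≤ (i:ℝ) * n / m := by
      have : (i:ℝ) * n / m - ((i:ℝ) - 1) * n / m = (n:ℝ)/m := by field_simp; ring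
      linarith
    have h2 : (i:ℝ) * n / m - 1 < (b : ℝ) := Nat.sub_one_lt_floor _
    linarith
  have hbn : b ≤ n := by
    rw [hb]
    have h1 : (i:ℝ) * n / m ≤ (n:ℝ) := by
      rw [div_le_iff₀ hmR]
      have : (i:ℝ) ≤ m := by linarith
      nlinarith
    calc ⌊(i:ℝ) * n / m⌋₊ ≤ ⌊(n:ℝ)⌋₊ := Nat.floor_le_floor h1
    _ = n := Nat.floor_natCast n
  -- key iffs for membership
  have key1 : ∀ j : ℕ, (((i:ℝ) - 1) / m ≤ (j:ℝ) / n) ↔ a ≤ j := by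
    intro j
    rw [div_le_div_iff₀ hmR hnR, ha, Nat.ceil_le, div_le_iff₀ hmR]
  have key2 : ∀ j : ℕ, ((j:ℝ) / n ≤ (i:ℝ) / m) ↔ j ≤ b := by
    intro j
    rw [div_le_div_iff₀ hnR hmR, hb, Nat.le_floor_iff hargb0, le_div_iff₀ hmR]
  -- the intersection of adjacent blocks
  have hinter : blockIdx n m i ∩ blockIdx n m (i + 1) = Finset.Icc a b := by
    ext j
    simp only [blockIdx, Finset.mem_inter, Finset.mem_filter, Finset.mem_range,
      Finset.mem_Icc]
    push_cast
    constructor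
    · rintro ⟨⟨hj1, hj2, hj3⟩, ⟨hj4, hj5, hj6⟩⟩
      refine ⟨(key1 j).mp ?_, (key2 j).mp hj3⟩
      calc ((i:ℝ) - 1) / m = ((i:ℝ) + 1 - 2) / m := by ring_nf
      _ ≤ (j:ℝ) / n := hj5
    · rintro ⟨hj1, hj2⟩
      have h1 : ((i:ℝ) - 1) / m ≤ (j:ℝ) / n := (key1 j).mpr hj1
      have h2 : (j:ℝ) / n ≤ (i:ℝ) / m := (key2 j).mpr hj2
      have hjn : j ≤ n := le_trans hj2 hbn
      have hd : ((i:ℝ) - 2) / m ≤ ((i:ℝ) - 1) / m := by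
        gcongr
        linarith
      refine ⟨⟨by omega, le_trans hd h1, h2⟩, ⟨by omega, ?_, ?_⟩⟩
      · calc ((i:ℝ) + 1 - 2) / m = ((i:ℝ) - 1) / m := by ring_nf
        _ ≤ (j:ℝ) / n := h1
      · calc (j:ℝ) / n ≤ (i:ℝ) / m := h2
        _ ≤ ((i:ℝ) + 1) / m := by
          gcongr
          linarith
  -- model facts
  obtain ⟨hWmeas, hηmeas, hgauss, hWcov, hηcov, hWη⟩ := hmodel n
  have hblock_le : ∀ i' : ℕ, ∀ j ∈ blockIdx n m i', j ≤ n := by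
    intro i' j hj
    have := (Finset.mem_filter.mp hj).1
    rw [Finset.mem_range] at this; omega
  set cf1 : ℕ → ℝ := fun j => lam ((m:ℝ) * j / n - ((i:ℝ) - 2)) * τ with hcf1
  set cf2 : ℕ → ℝ := fun j => lam ((m:ℝ) * j / n - (((i:ℕ)+1 : ℕ) - 2 : ℝ)) * τ with hcf2
  -- expectation of the product
  have hexp : (∫ ω, preAvg lam n m (fun j ω => τ * η n j ω) i ω *
        preAvg lam n m (fun j ω => τ * η n j ω) (i + 1) ω)
      = hh * hh * ∑ j ∈ Finset.Icc a b, cf1 j * cf2 j := by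
    have hrw : (fun ω => preAvg lam n m (fun j ω => τ * η n j ω) i ω *
        preAvg lam n m (fun j ω => τ * η n j ω) (i+1) ω)
        = fun ω => hh * hh *
          ((∑ j ∈ blockIdx n m i, cf1 j * η n j ω) *
           (∑ l ∈ blockIdx n m (i+1), cf2 l * η n l ω)) := by
      ext ω
      simp only [preAvg, hcf1, hcf2, hhdef]
      have e1 : ∑ j ∈ blockIdx n m i, lam ((m:ℝ)*j/n - ((i:ℝ)-2)) * (τ * η n j ω)
          = ∑ j ∈ blockIdx n m i, (lam ((m:ℝ)*j/n - ((i:ℝ)-2)) * τ) * η n j ω :=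
        Finset.sum_congr rfl fun j _ => by ring
      have e2 : ∑ l ∈ blockIdx n m (i+1),
            lam ((m:ℝ)*l/n - (((i:ℕ)+1 : ℕ) - 2 : ℝ)) * (τ * η n l ω)
          = ∑ l ∈ blockIdx n m (i+1),
            (lam ((m:ℝ)*l/n - (((i:ℕ)+1 : ℕ) - 2 : ℝ)) * τ) * η n l ω :=
        Finset.sum_congr rfl fun l _ => by ring
      rw [e1, e2]
      ring
    rw [hrw]
    rw [MeasureTheory.integral_const_mul]
    rw [expect_prod_sums n (η n) hηmeas hηcov _ _ (hblock_le i) (hblock_le (i+1)) cf1 cf2]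
    rw [hinter]
  -- rewrite the sum using antisymmetry
  have hx01 : ∀ j ∈ Finset.Icc a b, 0 ≤ x j ∧ x j ≤ 1 := by
    intro j hj
    rw [Finset.mem_Icc] at hj
    have hja : (a:ℝ) ≤ j := by exact_mod_cast hj.1
    have hjb : (j:ℝ) ≤ b := by exact_mod_cast hj.2
    have h1 := hxjk a j
    have h2 := hxjk j b
    constructor
    · nlinarith
    · nlinarith
  have hsum : ∑ j ∈ Finset.Icc a b, cf1 j * cf2 j
      = - (τ^2 * ∑ j ∈ Finset.Icc a b, g (x j)) := by
    have hpt : ∀ j ∈ Finset.Icc a b, cf1 j * cf2 j = - (τ^2 * g (x j)) := by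
      intro j hj
      obtain ⟨hxj0, hxj1⟩ := hx01 j hj
      have hu1 : (m:ℝ) * j / n - ((i:ℝ) - 2) = x j + 1 := by
        simp only [hxdef, hhdef]; ring
      have hu2 : (m:ℝ) * j / n - (((i:ℕ)+1 : ℕ) - 2 : ℝ) = x j := by
        push_cast
        simp only [hxdef, hhdef]; ring
      have hanti := hlam.antisymm (1 - x j) ⟨by linarith, by linarith⟩
      have h2eq : 2 - (1 - x j) = x j + 1 := by ring
      rw [h2eq] at hanti
      simp only [hcf1, hcf2, hu1, hu2, hgdef]
      rw [show lam (x j + 1) = - lam (1 - x j) by linarith]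
      ring
    calc ∑ j ∈ Finset.Icc a b, cf1 j * cf2 j
        = ∑ j ∈ Finset.Icc a b, - (τ^2 * g (x j)) := Finset.sum_congr rfl hpt
    _ = - ∑ j ∈ Finset.Icc a b, τ^2 * g (x j) := by rw [Finset.sum_neg_distrib]
    _ = - (τ^2 * ∑ j ∈ Finset.Icc a b, g (x j)) := by rw [Finset.mul_sum]
  -- Riemann sum estimate
  have hriem := riemann_sum_est g (M*M) (2*M*(Kl:ℝ)) (by positivity) (by positivity) S hgM
    hgLip hgint hh hh0 a b hab x hxjk hxa0 hxah hxb1 hxbh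
  set I := ∫ t in (0:ℝ)..1, g t with hI
  have hriem' : |I - ∑ j ∈ Finset.Icc a b, hh * g (x j)| ≤ CR * hh := by
    rw [abs_sub_comm]
    have : (2*M*(Kl:ℝ) + 4*(M*M)*S.card + 3*(M*M)) * hh = CR * hh := by rw [hCR]
    calc |∑ j ∈ Finset.Icc a b, hh * g (x j) - I|
        ≤ (2*M*(Kl:ℝ) + 4*(M*M)*S.card + 3*(M*M)) * hh := hriem
    _ = CR * hh := this
  have hgoal_eq : (∫ ω, preAvg lam n m (fun j ω => τ * η n j ω) i ω *
        preAvg lam n m (fun j ω => τ * η n j ω) (i + 1) ω) + τ^2 * hh * I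
      = τ^2 * hh * (I - ∑ j ∈ Finset.Icc a b, hh * g (x j)) := by
    rw [hexp, hsum, ← Finset.mul_sum]
    ring
  have hss : Real.sqrt n ^ 2 = n := Real.sq_sqrt (by positivity)
  clear_value m k a b hh x g S CR I cf1 cf2
  rw [hgoal_eq]
  have hτh : (0:ℝ) ≤ τ^2 * hh := by positivity
  rw [abs_mul, abs_of_nonneg hτh]
  have hm2 : (m:ℝ)^2 ≤ 4*c^2*n := by
    calc (m:ℝ)^2 ≤ (2*c*Real.sqrt n)^2 := by
          apply pow_le_pow_left₀ hmR.le hmlen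
    _ = 4*c^2*(Real.sqrt n^2) := by ring
    _ = 4*c^2*n := by rw [hss]
  have step1 : τ^2 * hh * |I - ∑ j ∈ Finset.Icc a b, hh * g (x j)| ≤ τ^2 * hh * (CR * hh) :=
    mul_le_mul_of_nonneg_left hriem' hτh
  have step2 : τ^2 * hh * (CR * hh) = τ^2 * CR * ((m:ℝ)^2/(n:ℝ)^2) := by
    rw [hhdef]; field_simp
  have step3 : τ^2 * CR * ((m:ℝ)^2/(n:ℝ)^2) ≤ τ^2 * CR * (4*c^2/n) := by
    apply mul_le_mul_of_nonneg_left _ (by positivity)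
    rw [div_le_div_iff₀ (by positivity) hnR]
    calc (m:ℝ)^2 * n ≤ (4*c^2*n) * n := mul_le_mul_of_nonneg_right hm2 hnR.le
    _ = 4*c^2*(n:ℝ)^2 := by ring
  calc τ^2 * hh * |I - ∑ j ∈ Finset.Icc a b, hh * g (x j)|
      ≤ τ^2 * hh * (CR * hh) := step1
  _ = τ^2 * CR * ((m:ℝ)^2/(n:ℝ)^2) := step2
  _ ≤ τ^2 * CR * (4*c^2/n) := step3
  _ = τ^2 * CR * (4*c^2) / n := by ring
end

section
/- In the simplified model, the bias correction matches the second moment of the pre-averaged noise up to O(1/n): there are constants C > 0 and N such that for all n ≥ N and all 2 ≤ i ≤ m, |E[ε̄_{i,m}²] − E[𝔟(λ,Y)_{i,m}]| ≤ C/n. -/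
open MeasureTheory ProbabilityTheory Real

lemma lam_bound (lam : ℝ → ℝ)
    (hpl : ∃ (N : ℕ) (t : ℕ → ℝ) (K : NNReal),
      0 < N ∧ t 0 = 0 ∧ t N = 2 ∧ (∀ i < N, t i < t (i + 1)) ∧
      ∀ i < N, LipschitzOnWith K lam (Set.Ioo (t i) (t (i + 1)))) :
    ∃ M : ℝ, 0 ≤ M ∧ ∀ x ∈ Set.Icc (0:ℝ) 2, |lam x| ≤ M := by
  obtain ⟨N, t, K, hN, h0, h2, hmono, hlip⟩ := hpl
  have tmono : ∀ a b, a ≤ b → b ≤ N → t a ≤ t b := by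
    intro a b hab hbN
    induction b with
    | zero => rw [Nat.le_zero.mp hab]
    | succ k ih =>
      rcases Nat.lt_succ_iff_lt_or_eq.mp (Nat.lt_succ_of_le hab) with h | h
      · exact (ih (by omega) (by omega)).trans (hmono k (by omega)).le
      · rw [h]
  have trange : ∀ k, k ≤ N → t k ∈ Set.Icc (0:ℝ) 2 := fun k hk =>
    ⟨h0 ▸ tmono 0 k (Nat.zero_le _) hk, h2 ▸ tmono k N hk le_rfl⟩
  have cover : ∀ x ∈ Set.Icc (0:ℝ) 2,
      (∃ k ≤ N, x = t k) ∨ ∃ k < N, x ∈ Set.Ioo (t k) (t (k+1)) := by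
    intro x hx
    have main : ∀ b, b ≤ N → x ≤ t b →
        (∃ k ≤ N, x = t k) ∨ ∃ k < N, x ∈ Set.Ioo (t k) (t (k+1)) := by
      intro b
      induction b with
      | zero => intro _ hxb; exact Or.inl ⟨0, Nat.zero_le _, le_antisymm hxb (h0 ▸ hx.1)⟩
      | succ k ih =>
        intro hbN hxb
        by_cases hxk : x ≤ t k
        · exact ih (by omega) hxk
        · push_neg at hxk
          rcases eq_or_lt_of_le hxb with he | hl
          · exact Or.inl ⟨k+1, hbN, he⟩
          · exact Or.inr ⟨k, by omega, hxk, hl⟩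
    exact main N le_rfl (h2 ▸ hx.2)
  refine ⟨(Finset.range (N+1)).sup' ⟨0, Finset.mem_range.mpr (by omega)⟩
      (fun k => max |lam (t k)| (|lam ((t k + t (k+1))/2)| + 2*(K:ℝ))), ?_, ?_⟩
  · have h1 : |lam (t 0)| ≤ max |lam (t 0)| (|lam ((t 0 + t 1)/2)| + 2*(K:ℝ)) := le_max_left _ _
    have h2' := Finset.le_sup' (f := fun k => max |lam (t k)| (|lam ((t k + t (k+1))/2)| + 2*(K:ℝ)))
      (Finset.mem_range.mpr (show 0 < N + 1 by omega))
    exact le_trans (abs_nonneg (lam (t 0))) (le_trans h1 h2')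
  · intro x hx
    rcases cover x hx with ⟨k, hk, rfl⟩ | ⟨k, hk, hxk⟩
    · exact le_trans (le_max_left _ _) (Finset.le_sup'
        (f := fun k => max |lam (t k)| (|lam ((t k + t (k+1))/2)| + 2*(K:ℝ)))
        (Finset.mem_range.mpr (by omega)))
    · set mid := (t k + t (k+1))/2 with hmid
      have hkk : t k < t (k+1) := hmono k hk
      have hmidm : mid ∈ Set.Ioo (t k) (t (k+1)) := by
        constructor <;> (rw [hmid]; linarith)
      have hd := (hlip k hk).dist_le_mul x hxk mid hmidm
      rw [Real.dist_eq, Real.dist_eq] at hd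
      obtain ⟨hta, htb⟩ := trange k (by omega)
      obtain ⟨htc, htd⟩ := trange (k+1) (by omega)
      obtain ⟨hx1, hx2⟩ := hx
      have hxm : |x - mid| ≤ 2 := by
        rw [abs_le, hmid]; constructor <;> linarith
      have hKnn : (0:ℝ) ≤ (K:ℝ) := K.coe_nonneg
      have hbound : |lam x| ≤ |lam mid| + 2*(K:ℝ) := by
        have h1 : |lam x| - |lam mid| ≤ |lam x - lam mid| := by
          have := abs_sub_abs_le_abs_sub (lam x) (lam mid)
          linarith
        have h2' : (K:ℝ) * |x - mid| ≤ (K:ℝ) * 2 := mul_le_mul_of_nonneg_left hxm hKnn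
        linarith
      refine hbound.trans (le_trans (le_max_right |lam (t k)| _) ?_)
      exact Finset.le_sup'
        (f := fun k => max |lam (t k)| (|lam ((t k + t (k+1))/2)| + 2*(K:ℝ)))
        (Finset.mem_range.mpr (by omega))

lemma memℒp_id_gaussianReal (v : NNReal) : MemLp (fun x : ℝ => x) 2 (gaussianReal 0 v) := by
  rcases eq_or_ne v 0 with h | h
  · subst h
    rw [gaussianReal_zero_var]
    have he : (fun x : ℝ => x) =ᵐ[Measure.dirac (0:ℝ)] fun _ => (0:ℝ) := by
      rw [Filter.EventuallyEq, ae_dirac_eq]; simp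
    exact (memLp_const (0:ℝ)).ae_eq he.symm
  · show MemLp id 2 _
    rw [gaussianReal_of_var_ne_zero _ h,
      memLp_two_iff_integrable_sq aestronglyMeasurable_id,
      integrable_withDensity_iff (measurable_gaussianPDF _ _)
        (ae_of_all _ fun x => ENNReal.ofReal_lt_top)]
    have hv : (0:ℝ) < (v:ℝ) := by positivity
    have hb : (0:ℝ) < (2*(v:ℝ))⁻¹ := by positivity
    have hint := (integrable_rpow_mul_exp_neg_mul_sq hb (s := 2) (by norm_num)).const_mul
      ((Real.sqrt (2 * Real.pi * v))⁻¹)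
    simp only [Real.rpow_two] at hint
    refine hint.congr (ae_of_all _ fun x => ?_)
    simp only [id_eq, gaussianPDF_def]
    rw [ENNReal.toReal_ofReal (gaussianPDFReal_nonneg _ _ _), gaussianPDFReal]
    rw [show -(x - 0) ^ 2 / (2 * (v:ℝ)) = -(2*(v:ℝ))⁻¹ * x ^ 2 by field_simp; ring]
    ring

lemma memℒp_of_map_gaussian {Ω : Type*} [MeasureSpace Ω] {f : Ω → ℝ} (hf : Measurable f)
    {v : NNReal} (h : Measure.map f ℙ = gaussianReal 0 v) : MemLp f 2 ℙ := by
  have h2 := memℒp_id_gaussianReal v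
  rw [← h] at h2
  exact (memLp_map_measure_iff aestronglyMeasurable_id hf.aemeasurable).mp h2

lemma integrable_mul₂ {Ω : Type*} [MeasureSpace Ω] {f g : Ω → ℝ}
    (hf : MemLp f 2 (ℙ : Measure Ω)) (hg : MemLp g 2 (ℙ : Measure Ω)) :
    Integrable (fun ω => f ω * g ω) ℙ := by
  refine ((hf.integrable_sq.add hg.integrable_sq).div_const 2).mono'
    (hf.1.mul hg.1) (ae_of_all _ fun ω => ?_)
  rw [Real.norm_eq_abs, abs_mul]
  simp only [Pi.add_apply]
  nlinarith [sq_nonneg (|f ω| - |g ω|), abs_nonneg (f ω), abs_nonneg (g ω),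
    sq_abs (f ω), sq_abs (g ω)]

lemma integral_sum_sq {Ω : Type*} [MeasureSpace Ω] (B : Finset ℕ) (cf : ℕ → ℝ) (f : ℕ → Ω → ℝ)
    (hf : ∀ j ∈ B, MemLp (f j) 2 (ℙ : Measure Ω)) :
    ∫ ω, (∑ j ∈ B, cf j * f j ω) ^ 2
      = ∑ j ∈ B, ∑ l ∈ B, (cf j * cf l) * ∫ ω, f j ω * f l ω := by
  have hint : ∀ j ∈ B, ∀ l ∈ B, Integrable (fun ω => (cf j * cf l) * (f j ω * f l ω)) ℙ :=
    fun j hj l hl => (integrable_mul₂ (hf j hj) (hf l hl)).const_mul _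
  calc ∫ ω, (∑ j ∈ B, cf j * f j ω) ^ 2
      = ∫ ω, ∑ j ∈ B, ∑ l ∈ B, (cf j * cf l) * (f j ω * f l ω) := by
        congr 1; funext ω
        rw [sq, Finset.sum_mul_sum]
        exact Finset.sum_congr rfl fun j _ => Finset.sum_congr rfl fun l _ => by ring
    _ = ∑ j ∈ B, ∑ l ∈ B, ∫ ω, (cf j * cf l) * (f j ω * f l ω) := by
        rw [integral_finset_sum _ (fun j hj => integrable_finset_sum _ (fun l hl => hint j hj l hl))]
        exact Finset.sum_congr rfl fun j hj => integral_finset_sum _ (fun l hl => hint j hj l hl)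
    _ = ∑ j ∈ B, ∑ l ∈ B, (cf j * cf l) * ∫ ω, f j ω * f l ω :=
        Finset.sum_congr rfl fun j _ => Finset.sum_congr rfl fun l _ => integral_const_mul _ _

lemma integral_obs_diff_sq {Ω : Type*} [MeasureSpace Ω] [IsProbabilityMeasure (ℙ : Measure Ω)]
    {n : ℕ} {W η : ℕ → Ω → ℝ} (hm : IsSimplifiedModel n W η) (σ τ : ℝ)
    (hW2 : ∀ j ≤ n, MemLp (W j) 2 (ℙ : Measure Ω)) (hη2 : ∀ j ≤ n, MemLp (η j) 2 (ℙ : Measure Ω))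
    {j : ℕ} (hj1 : 1 ≤ j) (hjn : j ≤ n) :
    ∫ ω, (obs σ τ W η j ω - obs σ τ W η (j-1) ω) ^ 2 = σ^2 / n + 2 * τ^2 := by
  obtain ⟨hWm, hηm, hgauss, hWW, hηη, hWη⟩ := hm
  have hnpos : (0:ℝ) < n := by
    have : 0 < n := by omega
    exact_mod_cast this
  set f : ℕ → Ω → ℝ := fun k => if k = 0 then W j else if k = 1 then W (j-1)
    else if k = 2 then η j else η (j-1) with hfdef
  set cf : ℕ → ℝ := fun k => if k = 0 then σ else if k = 1 then -σ
    else if k = 2 then τ else -τ with hcfdef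
  have hmem : ∀ k ∈ Finset.range 4, MemLp (f k) 2 (ℙ : Measure Ω) := by
    intro k _
    simp only [hfdef]
    split_ifs
    exacts [hW2 j hjn, hW2 (j-1) (by omega), hη2 j hjn, hη2 (j-1) (by omega)]
  have hrw : ∀ ω, obs σ τ W η j ω - obs σ τ W η (j-1) ω
      = ∑ k ∈ Finset.range 4, cf k * f k ω := by
    intro ω
    simp only [Finset.sum_range_succ, Finset.sum_range_zero, hfdef, hcfdef, obs]
    norm_num
    ring
  simp_rw [hrw]
  rw [integral_sum_sq _ _ _ hmem]
  have hj1n : j - 1 ≤ n := by omega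
  have hjc : ((j-1 : ℕ) : ℝ) = (j:ℝ) - 1 := by
    rw [Nat.cast_sub hj1, Nat.cast_one]
  have hcomm : ∀ g h : Ω → ℝ, ∫ ω, g ω * h ω = ∫ ω, h ω * g ω := fun g h =>
    integral_congr_ae (ae_of_all _ fun ω => mul_comm _ _)
  have e1 : ∫ ω, W j ω * W j ω = (j:ℝ)/n := by rw [hWW j j hjn hjn, min_self]
  have e2 : ∫ ω, W j ω * W (j-1) ω = ((j:ℝ)-1)/n := by
    rw [hWW j (j-1) hjn hj1n, min_eq_right (show ((j-1:ℕ):ℝ) ≤ (j:ℝ) by exact_mod_cast Nat.sub_le j 1), hjc]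
  have e3 : ∫ ω, W (j-1) ω * W j ω = ((j:ℝ)-1)/n := by rw [hcomm, e2]
  have e4 : ∫ ω, W (j-1) ω * W (j-1) ω = ((j:ℝ)-1)/n := by
    rw [hWW (j-1) (j-1) hj1n hj1n, min_self, hjc]
  have e5 : ∫ ω, η j ω * η j ω = 1 := by rw [hηη j j hjn hjn, if_pos rfl]
  have e6 : ∫ ω, η j ω * η (j-1) ω = 0 := by
    rw [hηη j (j-1) hjn hj1n, if_neg (by omega)]
  have e7 : ∫ ω, η (j-1) ω * η j ω = 0 := by rw [hcomm, e6]
  have e8 : ∫ ω, η (j-1) ω * η (j-1) ω = 1 := by rw [hηη (j-1) (j-1) hj1n hj1n, if_pos rfl]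
  have e9 : ∫ ω, W j ω * η j ω = 0 := hWη j j hjn hjn
  have e10 : ∫ ω, W j ω * η (j-1) ω = 0 := hWη j (j-1) hjn hj1n
  have e11 : ∫ ω, W (j-1) ω * η j ω = 0 := hWη (j-1) j hj1n hjn
  have e12 : ∫ ω, W (j-1) ω * η (j-1) ω = 0 := hWη (j-1) (j-1) hj1n hj1n
  have e13 : ∫ ω, η j ω * W j ω = 0 := by rw [hcomm, e9]
  have e14 : ∫ ω, η (j-1) ω * W j ω = 0 := by rw [hcomm, e10]
  have e15 : ∫ ω, η j ω * W (j-1) ω = 0 := by rw [hcomm, e11]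
  have e16 : ∫ ω, η (j-1) ω * W (j-1) ω = 0 := by rw [hcomm, e12]
  simp only [Finset.sum_range_succ, Finset.sum_range_zero, hfdef, hcfdef]
  norm_num
  rw [e1, e2, e3, e4, e5, e6, e7, e8, e9, e10, e11, e12, e13, e14, e15, e16]
  field_simp
  ring

lemma final_step_aux (σ τ c M nn : ℝ) (hσ : 0 < σ) (hτ : 0 < τ) (hc : 0 < c)
    (hM0 : 0 ≤ M) (hnR : 0 < nn) :
    (4*c^2*τ^2*(M^2+1))/nn + (σ^2*M^2*(2*c/nn) + σ^2*M^2*(4*c^2/nn))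
      ≤ (4*c^2*τ^2 + 2*c*σ^2 + 4*c^2*σ^2) * (M^2+1) / nn := by
  rw [show σ^2*M^2*(2*c/nn) + σ^2*M^2*(4*c^2/nn)
      = (2*c*σ^2*M^2 + 4*c^2*σ^2*M^2)/nn from by ring, ← add_div,
    div_le_div_iff₀ hnR hnR]
  nlinarith [mul_nonneg hc.le (mul_nonneg hσ.le hσ.le),
    mul_nonneg (mul_nonneg hc.le hc.le) (mul_nonneg hσ.le hσ.le), hnR,
    mul_pos hnR hnR]

set_option maxHeartbeats 1000000 in
theorem biasCorrection_matches_noise_second_moment (σ τ c : ℝ) (hσ : 0 < σ) (hτ : 0 < τ) (hc : 0 < c)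
    (lam : ℝ → ℝ) (hlam : IsPreAverageFn lam)
    (Ω : ℕ → Type*) [∀ n, MeasureSpace (Ω n)] [∀ n, IsProbabilityMeasure (ℙ : Measure (Ω n))]
    (W η : (n : ℕ) → ℕ → Ω n → ℝ)
    (hmodel : ∀ n, IsSimplifiedModel n (W n) (η n)) :
    ∃ C > 0, ∃ N : ℕ, ∀ n ≥ N, ∀ i : ℕ, 2 ≤ i → i ≤ mOf c n →
      |(∫ ω, (preAvg lam n (mOf c n) (fun j ω => τ * η n j ω) i ω) ^ 2)
          - ∫ ω, biasCorr lam n (mOf c n) (obs σ τ (W n) (η n)) i ω| ≤ C / n := by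
  obtain ⟨M, hM0, hM⟩ := lam_bound lam hlam.piecewise_lipschitz
  refine ⟨(4*c^2*τ^2 + 2*c*σ^2 + 4*c^2*σ^2) * (M^2+1), by positivity, ⌈(2*c)^2⌉₊ + 1, ?_⟩
  intro n hn i hi2 him
  set m := mOf c n with hmdef
  have hmodn := hmodel n
  obtain ⟨hWm, hηm, hgauss, hWW, hηη, hWη⟩ := hmodel n
  have hm2 : 2 ≤ m := le_trans hi2 him
  have hk1 : 1 ≤ ⌊Real.sqrt n / c⌋₊ := by
    by_contra h
    push_neg at h
    have h0 : ⌊Real.sqrt n / c⌋₊ = 0 := by omega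
    rw [hmdef, mOf, h0, Nat.div_zero] at hm2
    omega
  have hn1 : 1 ≤ n := by
    by_contra h
    push_neg at h
    have h0 : n = 0 := by omega
    rw [hmdef, mOf, h0, Nat.zero_div] at hm2
    omega
  have hnR : (0:ℝ) < n := by exact_mod_cast hn1
  have hmR : (0:ℝ) < m := by
    have : 0 < m := by omega
    exact_mod_cast this
  have hnN : ((2*c)^2 : ℝ) ≤ n := by
    have h1 : ⌈(2*c)^2⌉₊ ≤ n := by omega
    have h2 : ((⌈(2*c)^2⌉₊ : ℕ) : ℝ) ≤ n := by exact_mod_cast h1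
    exact (Nat.le_ceil _).trans h2
  have hsq : 2*c ≤ Real.sqrt n := by
    rw [show (2*c) = Real.sqrt ((2*c)^2) from (Real.sqrt_sq (by positivity)).symm]
    exact Real.sqrt_le_sqrt hnN
  have hsqpos : (0:ℝ) < Real.sqrt n := by positivity
  have hmle : (m:ℝ) ≤ 2*c*Real.sqrt n := by
    have h1 : (m:ℝ) ≤ (n:ℝ) / (⌊Real.sqrt n / c⌋₊ : ℝ) := by
      rw [hmdef, mOf]; exact Nat.cast_div_le
    have h3 : Real.sqrt n / c - 1 < (⌊Real.sqrt n / c⌋₊ : ℝ) := Nat.sub_one_lt_floor _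
    have h5 : (1:ℝ) ≤ Real.sqrt n/(2*c) := by
      rw [le_div_iff₀ (by positivity)]; linarith
    have h4 : Real.sqrt n / (2*c) ≤ (⌊Real.sqrt n / c⌋₊ : ℝ) := by
      have : Real.sqrt n / (2*c) = Real.sqrt n / c - Real.sqrt n/(2*c) := by ring
      rw [this]; linarith
    have h6 : (0:ℝ) < Real.sqrt n / (2*c) := by positivity
    have h7 : (n:ℝ) / (⌊Real.sqrt n / c⌋₊ : ℝ) ≤ (n:ℝ) / (Real.sqrt n / (2*c)) :=
      div_le_div_of_nonneg_left hnR.le h6 h4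
    have h8 : (n:ℝ) / (Real.sqrt n / (2*c)) = 2*c*((n:ℝ)/Real.sqrt n) := by
      rw [div_div_eq_mul_div, mul_comm ((n:ℝ)) (2*c), mul_div_assoc]
    rw [h8, Real.div_sqrt] at h7
    linarith
  have hmn : m ≤ n := Nat.div_le_self _ _
  have hmnR : (m:ℝ) ≤ (n:ℝ) := by exact_mod_cast hmn
  -- L² bounds
  have hW2 : ∀ j ≤ n, MemLp (W n j) 2 (ℙ : Measure (Ω n)) := by
    intro j hj
    obtain ⟨v, hv⟩ := hgauss (fun k => if k = j then 1 else 0) (fun _ => 0)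
    have heq : (fun ω => ∑ k ∈ Finset.range (n+1),
        ((if k = j then (1:ℝ) else 0) * W n k ω + (fun _ : ℕ => (0:ℝ)) k * η n k ω)) = W n j := by
      funext ω
      simp only [zero_mul, add_zero, ite_mul, one_mul]
      rw [Finset.sum_ite_eq' (Finset.range (n+1)) j (fun k => W n k ω),
        if_pos (Finset.mem_range.mpr (by omega))]
    rw [heq] at hv
    exact memℒp_of_map_gaussian (hWm j) hv
  have hη2 : ∀ j ≤ n, MemLp (η n j) 2 (ℙ : Measure (Ω n)) := by
    intro j hj
    obtain ⟨v, hv⟩ := hgauss (fun _ => 0) (fun k => if k = j then 1 else 0)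
    have heq : (fun ω => ∑ k ∈ Finset.range (n+1),
        ((fun _ : ℕ => (0:ℝ)) k * W n k ω + (if k = j then (1:ℝ) else 0) * η n k ω)) = η n j := by
      funext ω
      simp only [zero_mul, zero_add, ite_mul, one_mul]
      rw [Finset.sum_ite_eq' (Finset.range (n+1)) j (fun k => η n k ω),
        if_pos (Finset.mem_range.mpr (by omega))]
    rw [heq] at hv
    exact memℒp_of_map_gaussian (hηm j) hv
  -- block facts
  set B := blockIdx n m i with hBdef
  have hBsub : ∀ j ∈ B, j ≤ n := by
    intro j hj
    rw [hBdef, blockIdx, Finset.mem_filter, Finset.mem_range] at hj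
    omega
  have hBcond : ∀ j ∈ B, ((i:ℝ)-2)/m ≤ (j:ℝ)/n ∧ (j:ℝ)/n ≤ (i:ℝ)/m := by
    intro j hj
    rw [hBdef, blockIdx, Finset.mem_filter] at hj
    exact hj.2
  have hargmem : ∀ j ∈ B, ((m:ℝ) * j / n - ((i:ℝ)-2)) ∈ Set.Icc (0:ℝ) 2 := by
    intro j hj
    obtain ⟨h1, h2⟩ := hBcond j hj
    rw [div_le_div_iff₀ hmR hnR] at h1
    rw [div_le_div_iff₀ hnR hmR] at h2
    constructor
    · have hx : ((i:ℝ)-2) ≤ (m:ℝ)*j/n := by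
        rw [le_div_iff₀ hnR]; nlinarith
      linarith
    · have hx : (m:ℝ)*j/n ≤ (i:ℝ) := by
        rw [div_le_iff₀ hnR]; nlinarith
      linarith
  have hsqle : ∀ j ∈ B, (lam ((m:ℝ)*j/n - ((i:ℝ)-2)))^2 ≤ M^2 := by
    intro j hj
    have h := hM _ (hargmem j hj)
    nlinarith [abs_nonneg (lam ((m:ℝ)*j/n - ((i:ℝ)-2))), sq_abs (lam ((m:ℝ)*j/n - ((i:ℝ)-2)))]
  set g : ℕ → ℝ := fun j => (lam ((m:ℝ)*j/n - ((i:ℝ)-2)))^2 with hgdef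
  set S1 := ∑ j ∈ B, g j with hS1def
  set B' := B.filter (fun j => 1 ≤ j) with hB'def
  set S2 := ∑ j ∈ B', g j with hS2def
  have hS2S1 : S2 ≤ S1 :=
    Finset.sum_le_sum_of_subset_of_nonneg (Finset.filter_subset _ _)
      (fun j _ _ => sq_nonneg _)
  have hS20 : 0 ≤ S2 := Finset.sum_nonneg fun j _ => sq_nonneg _
  have hdiffle : S1 - S2 ≤ M^2 := by
    have hsplit : S2 + ∑ j ∈ B.filter (fun j => ¬ 1 ≤ j), g j = S1 :=
      Finset.sum_filter_add_sum_filter_not B _ g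
    have hsub : B.filter (fun j => ¬ 1 ≤ j) ⊆ {0} := by
      intro j hj
      rw [Finset.mem_filter] at hj
      simp only [Finset.mem_singleton]
      omega
    have hle : ∑ j ∈ B.filter (fun j => ¬ 1 ≤ j), g j
        ≤ ∑ j ∈ B.filter (fun j => ¬ 1 ≤ j), M^2 :=
      Finset.sum_le_sum fun j hj => hsqle j (Finset.filter_subset _ _ hj)
    have hcard : (B.filter (fun j => ¬ 1 ≤ j)).card ≤ 1 := by
      have := Finset.card_le_card hsub
      simpa using this
    rw [Finset.sum_const, nsmul_eq_mul] at hle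
    have : ((B.filter (fun j => ¬ 1 ≤ j)).card : ℝ) * M^2 ≤ 1 * M^2 := by
      apply mul_le_mul_of_nonneg_right _ (by positivity)
      exact_mod_cast hcard
    linarith
  have hcardB : (B.card : ℝ) ≤ 2*(n:ℝ)/(m:ℝ) + 2 := by
    have hci : ((i:ℝ) - 2) = ((i-2 : ℕ) : ℝ) := by
      rw [Nat.cast_sub hi2]; norm_num
    have hsubI : B ⊆ Finset.Icc ((i-2)*n/m) (i*n/m) := by
      intro j hj
      obtain ⟨h1, h2⟩ := hBcond j hj
      rw [Finset.mem_Icc]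
      rw [div_le_div_iff₀ hmR hnR] at h1
      rw [div_le_div_iff₀ hnR hmR] at h2
      constructor
      · have hr : ((i-2:ℕ):ℝ) * n ≤ (j:ℝ) * m := by rw [← hci]; linarith
        have hnat : (i-2)*n ≤ j*m := by exact_mod_cast hr
        calc (i-2)*n/m ≤ j*m/m := Nat.div_le_div_right hnat
          _ = j := Nat.mul_div_cancel j (by omega)
      · have hr : (j:ℝ) * m ≤ (i:ℕ) * n := by push_cast; linarith
        have hnat : j*m ≤ i*n := by exact_mod_cast hr
        calc j = j*m/m := (Nat.mul_div_cancel j (by omega)).symm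
          _ ≤ i*n/m := Nat.div_le_div_right hnat
    have hcard1 : B.card ≤ 2*n/m + 2 := by
      have hcc := Finset.card_le_card hsubI
      rw [Nat.card_Icc] at hcc
      have hisplit : i*n = (i-2)*n + 2*n := by
        rw [← Nat.add_mul, Nat.sub_add_cancel hi2]
      have hd : i*n/m ≤ (i-2)*n/m + (2*n/m + 1) := by
        rw [hisplit, Nat.add_div (show 0 < m by omega)]
        split_ifs <;> omega
      revert hcc hd
      generalize (i-2)*n/m = A
      generalize i*n/m = Bv
      generalize 2*n/m = D
      intro hcc hd
      omega
    calc (B.card : ℝ) ≤ ((2*n/m + 2 : ℕ) : ℝ) := by exact_mod_cast hcard1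
      _ ≤ 2*(n:ℝ)/m + 2 := by
        push_cast
        have h := Nat.cast_div_le (α := ℝ) (m := 2*n) (n := m)
        push_cast at h
        linarith
  have hS2card : S2 ≤ ((2*(n:ℝ)/m + 2)) * M^2 := by
    have h1 : S2 ≤ ∑ j ∈ B', M^2 :=
      Finset.sum_le_sum fun j hj => hsqle j (Finset.filter_subset _ _ hj)
    rw [Finset.sum_const, nsmul_eq_mul] at h1
    have h2 : (B'.card : ℝ) ≤ (B.card : ℝ) := by
      exact_mod_cast Finset.card_le_card (Finset.filter_subset _ _)
    have h3 : (B'.card : ℝ) * M^2 ≤ ((2*(n:ℝ)/m + 2)) * M^2 := by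
      apply mul_le_mul_of_nonneg_right _ (by positivity)
      linarith [hcardB]
    linarith
  -- compute LHS integral
  have hLHS : ∫ ω, (preAvg lam n m (fun j ω => τ * η n j ω) i ω)^2
      = ((m:ℝ)/n)^2 * (τ^2 * S1) := by
    have hpt : ∀ ω, preAvg lam n m (fun j ω => τ * η n j ω) i ω
        = ((m:ℝ)/n) * ∑ j ∈ B, (lam ((m:ℝ)*j/n - ((i:ℝ)-2)) * τ) * η n j ω := by
      intro ω
      rw [preAvg]
      congr 1
      exact Finset.sum_congr rfl fun j _ => by ring
    simp_rw [hpt, mul_pow]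
    rw [integral_const_mul]
    rw [integral_sum_sq B _ (η n) (fun j hj => hη2 j (hBsub j hj))]
    have hin : ∀ j ∈ B, ∑ l ∈ B, ((lam ((m:ℝ)*j/n - ((i:ℝ)-2)) * τ) * (lam ((m:ℝ)*l/n - ((i:ℝ)-2)) * τ))
          * ∫ ω, η n j ω * η n l ω = τ^2 * g j := by
      intro j hj
      have : ∀ l ∈ B, ((lam ((m:ℝ)*j/n - ((i:ℝ)-2)) * τ) * (lam ((m:ℝ)*l/n - ((i:ℝ)-2)) * τ))
          * ∫ ω, η n j ω * η n l ω
          = if j = l then ((lam ((m:ℝ)*j/n - ((i:ℝ)-2)) * τ) * (lam ((m:ℝ)*l/n - ((i:ℝ)-2)) * τ)) else 0 := by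
        intro l hl
        rw [hηη j l (hBsub j hj) (hBsub l hl)]
        split_ifs <;> simp
      rw [Finset.sum_congr rfl this, Finset.sum_ite_eq B j
        (fun l => (lam ((m:ℝ)*j/n - ((i:ℝ)-2)) * τ) * (lam ((m:ℝ)*l/n - ((i:ℝ)-2)) * τ)),
        if_pos hj, hgdef]
      ring
    rw [Finset.sum_congr rfl hin, ← Finset.mul_sum, ← hS1def]
  -- compute RHS integral
  have hobs2 : ∀ j ≤ n, MemLp (obs σ τ (W n) (η n) j) 2 (ℙ : Measure (Ω n)) := by
    intro j hj
    have := ((hW2 j hj).const_mul σ).add ((hη2 j hj).const_mul τ)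
    exact this
  have hdint : ∀ j ∈ B', Integrable (fun ω => g j *
      (obs σ τ (W n) (η n) j ω - obs σ τ (W n) (η n) (j-1) ω)^2) ℙ := by
    intro j hj
    have hjn := hBsub j (Finset.filter_subset _ _ hj)
    have hd : MemLp (fun ω => obs σ τ (W n) (η n) j ω - obs σ τ (W n) (η n) (j-1) ω) 2
        (ℙ : Measure (Ω n)) := (hobs2 j hjn).sub (hobs2 (j-1) (by omega))
    exact hd.integrable_sq.const_mul _
  have hRHS : ∫ ω, biasCorr lam n m (obs σ τ (W n) (η n)) i ω
      = ((m:ℝ)^2/(2*(n:ℝ)^2)) * ((σ^2/n + 2*τ^2) * S2) := by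
    rw [show (fun ω => biasCorr lam n m (obs σ τ (W n) (η n)) i ω)
        = fun ω => ((m:ℝ)^2/(2*(n:ℝ)^2)) * ∑ j ∈ B', g j *
          (obs σ τ (W n) (η n) j ω - obs σ τ (W n) (η n) (j-1) ω)^2 from rfl]
    rw [integral_const_mul]
    congr 1
    rw [integral_finset_sum _ hdint]
    have hterm : ∀ j ∈ B', ∫ ω, g j *
        (obs σ τ (W n) (η n) j ω - obs σ τ (W n) (η n) (j-1) ω)^2
        = g j * (σ^2/n + 2*τ^2) := by
      intro j hj
      rw [integral_const_mul]
      congr 1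
      have hj1 : 1 ≤ j := (Finset.mem_filter.mp hj).2
      exact integral_obs_diff_sq hmodn σ τ hW2 hη2 hj1 (hBsub j (Finset.filter_subset _ _ hj))
    rw [Finset.sum_congr rfl hterm, ← Finset.sum_mul, ← hS2def]
    ring
  rw [hLHS, hRHS]
  -- final estimate
  have hkey : ((m:ℝ)/n)^2 * (τ^2 * S1) - ((m:ℝ)^2/(2*(n:ℝ)^2)) * ((σ^2/n + 2*τ^2) * S2)
      = (m:ℝ)^2/(n:ℝ)^2*τ^2*(S1-S2) - (m:ℝ)^2*σ^2/(2*(n:ℝ)^3)*S2 := by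
    ring
  rw [hkey]
  have hm2n : (m:ℝ)^2 ≤ 4*c^2*(n:ℝ) := by
    have h := mul_self_le_mul_self (by positivity : (0:ℝ) ≤ (m:ℝ)) hmle
    have hs : Real.sqrt n * Real.sqrt n = (n:ℝ) := Real.mul_self_sqrt hnR.le
    nlinarith
  have hn1R : (1:ℝ) ≤ (n:ℝ) := by exact_mod_cast hn1
  have hsqn : Real.sqrt n ≤ (n:ℝ) := by
    have := Real.sqrt_le_sqrt (show (n:ℝ) ≤ (n:ℝ)^2 by nlinarith)
    rwa [Real.sqrt_sq hnR.le] at this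
  have hmlen : (m:ℝ) ≤ 2*c*(n:ℝ) := by nlinarith
  have habs1 : |(m:ℝ)^2/(n:ℝ)^2*τ^2*(S1-S2)| ≤ (m:ℝ)^2/(n:ℝ)^2*τ^2*M^2 := by
    rw [abs_of_nonneg (mul_nonneg (by positivity) (by linarith))]
    exact mul_le_mul_of_nonneg_left hdiffle (by positivity)
  have habs2 : |(m:ℝ)^2*σ^2/(2*(n:ℝ)^3)*S2|
      ≤ (m:ℝ)^2*σ^2/(2*(n:ℝ)^3)*((2*(n:ℝ)/m + 2)*M^2) := by
    rw [abs_of_nonneg (mul_nonneg (by positivity) hS20)]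
    exact mul_le_mul_of_nonneg_left hS2card (by positivity)
  have htri : |(m:ℝ)^2/(n:ℝ)^2*τ^2*(S1-S2) - (m:ℝ)^2*σ^2/(2*(n:ℝ)^3)*S2|
      ≤ (m:ℝ)^2/(n:ℝ)^2*τ^2*M^2 + (m:ℝ)^2*σ^2/(2*(n:ℝ)^3)*((2*(n:ℝ)/m + 2)*M^2) := by
    have h := abs_sub ((m:ℝ)^2/(n:ℝ)^2*τ^2*(S1-S2)) ((m:ℝ)^2*σ^2/(2*(n:ℝ)^3)*S2)
    linarith
  have hb1 : (m:ℝ)^2/(n:ℝ)^2*τ^2*M^2 ≤ (4*c^2*τ^2*(M^2+1))/n := by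
    rw [show (m:ℝ)^2/(n:ℝ)^2*τ^2*M^2 = (m:ℝ)^2*τ^2*M^2/(n:ℝ)^2 from by ring,
      div_le_div_iff₀ (by positivity) hnR]
    nlinarith [mul_le_mul_of_nonneg_right hm2n (show (0:ℝ) ≤ τ^2*M^2*n by positivity),
      mul_nonneg (mul_nonneg (by positivity : (0:ℝ) ≤ 4*c^2) (by positivity : (0:ℝ) ≤ τ^2))
        (by positivity : (0:ℝ) ≤ (n:ℝ)^2)]
  have hb2a : (m:ℝ)/(n:ℝ)^2 ≤ 2*c/(n:ℝ) := by
    rw [div_le_div_iff₀ (by positivity) hnR]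
    nlinarith [mul_le_mul_of_nonneg_right hmlen hnR.le]
  have hb2b : (m:ℝ)^2/(n:ℝ)^3 ≤ 4*c^2/(n:ℝ) := by
    rw [div_le_div_iff₀ (by positivity) hnR]
    nlinarith [mul_le_mul_of_nonneg_right hm2n hnR.le,
      mul_nonneg (mul_nonneg (by positivity : (0:ℝ) ≤ 4*c^2)
        (by positivity : (0:ℝ) ≤ (n:ℝ)^2)) (by linarith : (0:ℝ) ≤ (n:ℝ)-1)]
  have heq2 : (m:ℝ)^2*σ^2/(2*(n:ℝ)^3)*((2*(n:ℝ)/m + 2)*M^2)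
      = σ^2*M^2*((m:ℝ)/(n:ℝ)^2) + σ^2*M^2*((m:ℝ)^2/(n:ℝ)^3) := by
    field_simp
  calc |(m:ℝ)^2/(n:ℝ)^2*τ^2*(S1-S2) - (m:ℝ)^2*σ^2/(2*(n:ℝ)^3)*S2|
      ≤ (m:ℝ)^2/(n:ℝ)^2*τ^2*M^2 + (σ^2*M^2*((m:ℝ)/(n:ℝ)^2) + σ^2*M^2*((m:ℝ)^2/(n:ℝ)^3)) := by
        rw [← heq2]; exact htri
    _ ≤ (4*c^2*τ^2*(M^2+1))/n + (σ^2*M^2*(2*c/(n:ℝ)) + σ^2*M^2*(4*c^2/(n:ℝ))) := by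
        refine add_le_add hb1 (add_le_add ?_ ?_)
        · exact mul_le_mul_of_nonneg_left hb2a (by positivity)
        · exact mul_le_mul_of_nonneg_left hb2b (by positivity)
    _ ≤ (4*c^2*τ^2 + 2*c*σ^2 + 4*c^2*σ^2) * (M^2+1) / n :=
        final_step_aux σ τ c M n hσ hτ hc hM0 hnR
end

section
/- In the simplified model, the rescaled realized quadratic variation τ̂² := (2n)^{−1} Σ_{i=2}^n (Y_{i,n} − Y_{i−1,n})² is a √n-consistent estimator of the noise variance τ²: there is a constant C > 0 such that E[(τ̂² − τ²)²] ≤ C/n for all n ≥ 2. -/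
open MeasureTheory ProbabilityTheory Real

section AuxiliaryForRealizedQV
open Set
open scoped NNReal ENNReal



lemma even_int_eq_two_mul (f : ℝ → ℝ) (hf : Integrable f) (heven : ∀ x, f (-x) = f x) :
    ∫ x : ℝ, f x = 2 * ∫ x in Ioi (0:ℝ), f x := by
  have h1 : (∫ x in Iic (0:ℝ), f x) = ∫ x in Ioi (0:ℝ), f x := by
    rw [← neg_zero, ← integral_comp_neg_Ioi]
    simp_rw [heven, neg_zero]
  rw [← intervalIntegral.integral_Iic_add_Ioi hf.integrableOn hf.integrableOn, h1]
  ring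

lemma integrable_pow_mul_exp_neg_mul_sq {b : ℝ} (hb : 0 < b) (k : ℕ) :
    Integrable (fun x : ℝ => x ^ k * Real.exp (-b * x ^ 2)) := by
  have := integrable_rpow_mul_exp_neg_mul_sq hb (s := (k : ℝ)) (lt_of_lt_of_le neg_one_lt_zero (Nat.cast_nonneg k))
  simpa [Real.rpow_natCast] using this

lemma int_Ioi_pow_mul_exp {b : ℝ} (hb : 0 < b) (k : ℕ) :
    ∫ x in Ioi (0:ℝ), x ^ k * Real.exp (-b * x ^ 2)
      = b ^ (-((k:ℝ) + 1) / 2) * (1 / 2) * Real.Gamma (((k:ℝ) + 1) / 2) := by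
  rw [← integral_rpow_mul_exp_neg_mul_rpow (by norm_num : (0:ℝ) < 2) (by exact lt_of_lt_of_le neg_one_lt_zero (Nat.cast_nonneg k)) hb]
  refine setIntegral_congr_fun measurableSet_Ioi (fun x hx => ?_)
  rw [show ((2:ℝ)) = ((2:ℕ):ℝ) by norm_num, Real.rpow_natCast, Real.rpow_natCast]

example : Real.Gamma (3/2) = Real.sqrt π / 2 := by
  rw [show (3:ℝ)/2 = 1/2 + 1 by norm_num, Real.Gamma_add_one (by norm_num),
    Real.Gamma_one_half_eq]
  ring

lemma gaussianPDFReal_zero_eq (v : ℝ≥0) (x : ℝ) :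
    gaussianPDFReal 0 v x = (Real.sqrt (2 * π * v))⁻¹ * Real.exp (-(2 * (v:ℝ))⁻¹ * x ^ 2) := by
  rw [gaussianPDFReal]
  congr 1
  rw [sub_zero]
  by_cases hv : (v:ℝ) = 0
  · simp [hv]
  · congr 1
    field_simp
lemma gaussianReal_withDensity {v : ℝ≥0} (hv : v ≠ 0) :
    gaussianReal 0 v
      = volume.withDensity (fun x => ((Real.toNNReal (gaussianPDFReal 0 v x) : ℝ≥0) : ℝ≥0∞)) := by
  rw [gaussianReal_of_var_ne_zero _ hv]
  rfl

lemma integral_fun_gaussianReal {v : ℝ≥0} (hv : v ≠ 0) (g : ℝ → ℝ) :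
    ∫ x, g x ∂(gaussianReal 0 v) = ∫ x, gaussianPDFReal 0 v x * g x := by
  rw [gaussianReal_withDensity hv,
    integral_withDensity_eq_integral_smul (show Measurable fun x => Real.toNNReal (gaussianPDFReal 0 v x) from
      measurable_real_toNNReal.comp (measurable_gaussianPDFReal 0 v)) g]
  congr 1 with x
  simp [NNReal.smul_def, Real.coe_toNNReal _ (gaussianPDFReal_nonneg 0 v x)]

lemma integrable_pow_gaussianReal (v : ℝ≥0) (k : ℕ) :
    Integrable (fun x : ℝ => x ^ k) (gaussianReal 0 v) := by
  by_cases hv : v = 0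
  · rw [hv, gaussianReal_zero_var]
    exact (integrable_const ((0:ℝ) ^ k)).congr (ae_eq_dirac fun x : ℝ => x ^ k).symm
  have hvpos : (0:ℝ) < v := lt_of_le_of_ne v.coe_nonneg (by exact_mod_cast (Ne.symm hv))
  have hb : (0:ℝ) < (2 * (v:ℝ))⁻¹ := by positivity
  rw [gaussianReal_withDensity hv, integrable_withDensity_iff
    ((show Measurable fun x => Real.toNNReal (gaussianPDFReal 0 v x) from
      measurable_real_toNNReal.comp (measurable_gaussianPDFReal 0 v)).coe_nnreal_ennreal)
    (Filter.Eventually.of_forall fun x => ENNReal.coe_lt_top)]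
  have : (fun x : ℝ => x ^ k * ((Real.toNNReal (gaussianPDFReal 0 v x) : ℝ≥0∞)).toReal)
      = fun x : ℝ => (Real.sqrt (2 * π * v))⁻¹ * (x ^ k * Real.exp (-(2 * (v:ℝ))⁻¹ * x ^ 2)) := by
    funext x
    rw [ENNReal.coe_toReal, Real.coe_toNNReal _ (gaussianPDFReal_nonneg 0 v x),
      gaussianPDFReal_zero_eq]
    ring
  rw [this]
  exact (integrable_pow_mul_exp_neg_mul_sq hb k).const_mul _


lemma integral_pow_gaussianReal_aux {v : ℝ≥0} (hv : v ≠ 0) (k : ℕ) (hk : Even k) :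
    ∫ x, x ^ k ∂(gaussianReal 0 v)
      = (Real.sqrt (2 * π * v))⁻¹ * (((2 * (v:ℝ))⁻¹) ^ (-((k:ℝ) + 1) / 2)
          * Real.Gamma (((k:ℝ) + 1) / 2)) := by
  have hvpos : (0:ℝ) < v := lt_of_le_of_ne v.coe_nonneg (by exact_mod_cast (Ne.symm hv))
  have hb : (0:ℝ) < (2 * (v:ℝ))⁻¹ := by positivity
  rw [integral_fun_gaussianReal hv]
  have h1 : (fun x : ℝ => gaussianPDFReal 0 v x * x ^ k)
      = fun x : ℝ => (Real.sqrt (2 * π * v))⁻¹ * (x ^ k * Real.exp (-(2 * (v:ℝ))⁻¹ * x ^ 2)) := by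
    funext x; rw [gaussianPDFReal_zero_eq]; ring
  rw [h1, integral_const_mul,
    even_int_eq_two_mul _ (integrable_pow_mul_exp_neg_mul_sq hb k)
      (fun x => by rw [hk.neg_pow, neg_sq]),
    int_Ioi_pow_mul_exp hb k]
  ring

lemma two_v_rpow (v : ℝ≥0) (hvpos : (0:ℝ) < v) (m : ℕ) :
    ((2 * (v:ℝ))⁻¹) ^ (-((m:ℝ) + 1/2)) = (2*(v:ℝ)) ^ m * Real.sqrt (2 * v) := by
  have h2v : (0:ℝ) < 2 * v := by positivity
  rw [← Real.rpow_neg_one (2*(v:ℝ)), ← Real.rpow_natCast (2*(v:ℝ)) m, ← Real.rpow_mul h2v.le,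
    show ((-1:ℝ)) * -((m:ℝ)+1/2) = (m:ℝ) + 1/2 by ring, Real.rpow_add h2v,
    Real.rpow_natCast, Real.sqrt_eq_rpow]

lemma integral_pow_two_gaussianReal (v : ℝ≥0) :
    ∫ x, x ^ 2 ∂(gaussianReal 0 v) = v := by
  by_cases hv : v = 0
  · rw [hv, gaussianReal_zero_var, integral_dirac]; norm_num
  have hvpos : (0:ℝ) < v := lt_of_le_of_ne v.coe_nonneg (by exact_mod_cast (Ne.symm hv))
  rw [integral_pow_gaussianReal_aux hv 2 (by decide)]
  have hB : ((2 * (v:ℝ))⁻¹) ^ (-(((2:ℕ):ℝ) + 1) / 2) = (2*(v:ℝ)) ^ 1 * Real.sqrt (2 * v) := by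
    rw [show (-(((2:ℕ):ℝ) + 1) / 2) = -((1:ℕ) + 1/2 : ℝ) by push_cast; ring]
    exact_mod_cast two_v_rpow v hvpos 1
  have hΓ : Real.Gamma ((((2:ℕ):ℝ) + 1) / 2) = Real.sqrt π / 2 := by
    rw [show ((((2:ℕ):ℝ) + 1) / 2) = 1/2 + 1 by push_cast; ring,
      Real.Gamma_add_one (by norm_num), Real.Gamma_one_half_eq]; ring
  rw [hB, hΓ]
  have hsplit : Real.sqrt (2 * π * v) = Real.sqrt π * Real.sqrt (2 * v) := by
    rw [show 2 * π * (v:ℝ) = π * (2 * v) by ring, Real.sqrt_mul pi_pos.le]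
  rw [hsplit]
  have h1 : Real.sqrt π ≠ 0 := by positivity
  have h2 : Real.sqrt (2 * (v:ℝ)) ≠ 0 := by positivity
  field_simp

lemma integral_pow_four_gaussianReal (v : ℝ≥0) :
    ∫ x, x ^ 4 ∂(gaussianReal 0 v) = 3 * (v:ℝ) ^ 2 := by
  by_cases hv : v = 0
  · rw [hv, gaussianReal_zero_var, integral_dirac]; norm_num
  have hvpos : (0:ℝ) < v := lt_of_le_of_ne v.coe_nonneg (by exact_mod_cast (Ne.symm hv))
  rw [integral_pow_gaussianReal_aux hv 4 (by decide)]
  have hB : ((2 * (v:ℝ))⁻¹) ^ (-(((4:ℕ):ℝ) + 1) / 2) = (2*(v:ℝ)) ^ 2 * Real.sqrt (2 * v) := by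
    rw [show (-(((4:ℕ):ℝ) + 1) / 2) = -((2:ℕ) + 1/2 : ℝ) by push_cast; ring]
    exact_mod_cast two_v_rpow v hvpos 2
  have hΓ : Real.Gamma ((((4:ℕ):ℝ) + 1) / 2) = 3 * Real.sqrt π / 4 := by
    rw [show ((((4:ℕ):ℝ) + 1) / 2) = (1/2 + 1) + 1 by push_cast; ring,
      Real.Gamma_add_one (by norm_num), Real.Gamma_add_one (by norm_num),
      Real.Gamma_one_half_eq]; ring
  rw [hB, hΓ]
  have hsplit : Real.sqrt (2 * π * v) = Real.sqrt π * Real.sqrt (2 * v) := by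
    rw [show 2 * π * (v:ℝ) = π * (2 * v) by ring, Real.sqrt_mul pi_pos.le]
  rw [hsplit]
  have h1 : Real.sqrt π ≠ 0 := by positivity
  have h2 : Real.sqrt (2 * (v:ℝ)) ≠ 0 := by positivity
  field_simp
  ring


/-- Moment facts for a random variable whose law is a centered Gaussian. -/
lemma gaussian_rv_moments {Ω : Type*} [MeasureSpace Ω] {S : Ω → ℝ} (hSm : Measurable S)
    {v : ℝ≥0} (hv : Measure.map S ℙ = gaussianReal 0 v) :
    (∀ k : ℕ, Integrable (fun ω => S ω ^ k)) ∧
      ∫ ω, (S ω) ^ 4 = 3 * (∫ ω, (S ω) ^ 2) ^ 2 := by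
  have hgm : ∀ k : ℕ, AEStronglyMeasurable (fun x : ℝ => x ^ k) (Measure.map S ℙ) :=
    fun k => Measurable.aestronglyMeasurable (by fun_prop)
  have hint : ∀ k : ℕ, Integrable (fun ω => S ω ^ k) := by
    intro k
    exact (integrable_map_measure (g := fun x : ℝ => x ^ k) (f := S)
      (hgm k) hSm.aemeasurable).mp (hv ▸ integrable_pow_gaussianReal v k)
  have hik : ∀ k : ℕ, ∫ ω, (S ω) ^ k = ∫ x, x ^ k ∂(gaussianReal 0 v) := by
    intro k
    rw [← hv]
    exact (integral_map (f := fun x : ℝ => x ^ k) hSm.aemeasurable (hgm k)).symm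
  refine ⟨hint, ?_⟩
  rw [hik 4, hik 2, integral_pow_two_gaussianReal, integral_pow_four_gaussianReal]

/-- Isserlis-type identity for squares from fourth-moment identities. -/
lemma isserlis_sq {Ω : Type*} [MeasureSpace Ω] {X Y : Ω → ℝ}
    (hXm : Measurable X) (hYm : Measurable Y)
    (hX2 : Integrable (fun ω => X ω ^ 2)) (hY2 : Integrable (fun ω => Y ω ^ 2))
    (hX4 : Integrable (fun ω => X ω ^ 4)) (hY4 : Integrable (fun ω => Y ω ^ 4))
    (hadd4 : Integrable (fun ω => (X ω + Y ω) ^ 4))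
    (hsub4 : Integrable (fun ω => (X ω - Y ω) ^ 4))
    (h4X : ∫ ω, X ω ^ 4 = 3 * (∫ ω, X ω ^ 2) ^ 2)
    (h4Y : ∫ ω, Y ω ^ 4 = 3 * (∫ ω, Y ω ^ 2) ^ 2)
    (h4add : ∫ ω, (X ω + Y ω) ^ 4 = 3 * (∫ ω, (X ω + Y ω) ^ 2) ^ 2)
    (h4sub : ∫ ω, (X ω - Y ω) ^ 4 = 3 * (∫ ω, (X ω - Y ω) ^ 2) ^ 2) :
    ∫ ω, X ω ^ 2 * Y ω ^ 2
      = (∫ ω, X ω ^ 2) * (∫ ω, Y ω ^ 2) + 2 * (∫ ω, X ω * Y ω) ^ 2 := by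
  have key : ∀ (f g : Ω → ℝ), Measurable f → Integrable g → (∀ ω, |f ω| ≤ g ω) →
      Integrable f := fun f g hf hg hb => hg.mono hf.aestronglyMeasurable
    (Filter.Eventually.of_forall fun ω => by
      simpa [Real.norm_eq_abs] using (hb ω).trans (le_abs_self _))
  have h24 : Integrable (fun ω => X ω ^ 2 + Y ω ^ 2) := hX2.add hY2
  have h44 : Integrable (fun ω => X ω ^ 4 + Y ω ^ 4) := hX4.add hY4
  have hXY : Integrable (fun ω => X ω * Y ω) :=
    key _ _ (hXm.mul hYm) h24 fun ω => by
      rw [abs_mul]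
      nlinarith [sq_nonneg (|X ω| - |Y ω|), sq_abs (X ω), sq_abs (Y ω),
        abs_nonneg (X ω), abs_nonneg (Y ω)]
  have habs : ∀ x y : ℝ, |x ^ 3 * y| ≤ x ^ 4 + y ^ 4 := by
    intro x y
    refine abs_le.mpr ⟨?_, ?_⟩ <;>
      nlinarith [sq_nonneg (x ^ 2 - x * y), sq_nonneg (x ^ 2 + x * y), sq_nonneg (x * y),
        sq_nonneg x, sq_nonneg y, sq_nonneg (x ^ 2 - y ^ 2), sq_nonneg (x * y - y ^ 2),
        sq_nonneg (x * y + y ^ 2)]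
  have hX3Y : Integrable (fun ω => X ω ^ 3 * Y ω) :=
    key _ _ ((hXm.pow_const 3).mul hYm) h44 fun ω => habs _ _
  have hXY3 : Integrable (fun ω => X ω * Y ω ^ 3) :=
    key _ _ (hXm.mul (hYm.pow_const 3)) h44 fun ω => by
      have := habs (Y ω) (X ω)
      calc |X ω * Y ω ^ 3| = |Y ω ^ 3 * X ω| := by rw [mul_comm]
        _ ≤ Y ω ^ 4 + X ω ^ 4 := habs _ _
        _ = X ω ^ 4 + Y ω ^ 4 := by ring
  have hX2Y2 : Integrable (fun ω => X ω ^ 2 * Y ω ^ 2) :=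
    key _ _ ((hXm.pow_const 2).mul (hYm.pow_const 2)) h44 fun ω => by
      rw [abs_of_nonneg (by positivity)]
      nlinarith [sq_nonneg (X ω ^ 2 - Y ω ^ 2)]
  have hadd2 : ∫ ω, (X ω + Y ω) ^ 2 = (∫ ω, X ω ^ 2) + 2 * (∫ ω, X ω * Y ω) + ∫ ω, Y ω ^ 2 := by
    have h : (fun ω => (X ω + Y ω) ^ 2)
        = fun ω => X ω ^ 2 + ((2 : ℝ) * (X ω * Y ω) + Y ω ^ 2) := by funext ω; ring
    have i1 : Integrable (fun ω => (2:ℝ) * (X ω * Y ω)) := hXY.const_mul 2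
    have i2 : Integrable (fun ω => (2:ℝ) * (X ω * Y ω) + Y ω ^ 2) := i1.add hY2
    rw [h, integral_add hX2 i2, integral_add i1 hY2, integral_const_mul]
    ring
  have hsub2 : ∫ ω, (X ω - Y ω) ^ 2 = (∫ ω, X ω ^ 2) - 2 * (∫ ω, X ω * Y ω) + ∫ ω, Y ω ^ 2 := by
    have h : (fun ω => (X ω - Y ω) ^ 2)
        = fun ω => X ω ^ 2 + ((-2 : ℝ) * (X ω * Y ω) + Y ω ^ 2) := by funext ω; ring
    have i1 : Integrable (fun ω => (-2:ℝ) * (X ω * Y ω)) := hXY.const_mul (-2)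
    have i2 : Integrable (fun ω => (-2:ℝ) * (X ω * Y ω) + Y ω ^ 2) := i1.add hY2
    rw [h, integral_add hX2 i2, integral_add i1 hY2, integral_const_mul]
    ring
  have hkey : (∫ ω, (X ω + Y ω) ^ 4) + ∫ ω, (X ω - Y ω) ^ 4
      = 2 * (∫ ω, X ω ^ 4) + 12 * (∫ ω, X ω ^ 2 * Y ω ^ 2) + 2 * ∫ ω, Y ω ^ 4 := by
    rw [← integral_add hadd4 hsub4]
    have h : (fun ω => (X ω + Y ω) ^ 4 + (X ω - Y ω) ^ 4)
        = fun ω => (2:ℝ) * X ω ^ 4 + ((12:ℝ) * (X ω ^ 2 * Y ω ^ 2) + (2:ℝ) * Y ω ^ 4) := by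
      funext ω; ring
    have i1 : Integrable (fun ω => (2:ℝ) * X ω ^ 4) := hX4.const_mul 2
    have i2 : Integrable (fun ω => (12:ℝ) * (X ω ^ 2 * Y ω ^ 2)) := hX2Y2.const_mul 12
    have i3 : Integrable (fun ω => (2:ℝ) * Y ω ^ 4) := hY4.const_mul 2
    have i4 : Integrable (fun ω => (12:ℝ) * (X ω ^ 2 * Y ω ^ 2) + (2:ℝ) * Y ω ^ 4) := i2.add i3
    rw [h, integral_add i1 i4, integral_add i2 i3, integral_const_mul,
      integral_const_mul, integral_const_mul]
    ring
  rw [h4add, h4sub, h4X, h4Y, hadd2, hsub2] at hkey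
  linear_combination (-1/12 : ℝ) * hkey

lemma integrable_mul_of_sq {Ω : Type*} [MeasureSpace Ω] {f g : Ω → ℝ}
    (hfm : Measurable f) (hgm : Measurable g)
    (hf : Integrable (fun ω => f ω ^ 2)) (hg : Integrable (fun ω => g ω ^ 2)) :
    Integrable (fun ω => f ω * g ω) := by
  refine (hf.add hg).mono ((hfm.mul hgm).aestronglyMeasurable)
    (Filter.Eventually.of_forall fun ω => ?_)
  have h1 : |f ω * g ω| ≤ f ω ^ 2 + g ω ^ 2 := by
    rw [abs_mul]
    nlinarith [sq_nonneg (|f ω| - |g ω|), sq_abs (f ω), sq_abs (g ω),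
      abs_nonneg (f ω), abs_nonneg (g ω)]
  calc ‖f ω * g ω‖ = |f ω * g ω| := rfl
    _ ≤ f ω ^ 2 + g ω ^ 2 := h1
    _ ≤ |f ω ^ 2 + g ω ^ 2| := le_abs_self _

lemma integrable_sq_sub {Ω : Type*} [MeasureSpace Ω] {f g : Ω → ℝ}
    (hfm : Measurable f) (hgm : Measurable g)
    (hf : Integrable (fun ω => f ω ^ 2)) (hg : Integrable (fun ω => g ω ^ 2)) :
    Integrable (fun ω => (f ω - g ω) ^ 2) := by
  have h : (fun ω => (f ω - g ω) ^ 2)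
      = fun ω => f ω ^ 2 + ((-2 : ℝ) * (f ω * g ω) + g ω ^ 2) := by
    funext ω; ring
  rw [h]
  exact hf.add (((integrable_mul_of_sq hfm hgm hf hg).const_mul (-2)).add hg)

/-- Bilinear expansion of the integral of a product of two linear combinations. -/
lemma integral_bilinear {Ω : Type*} [MeasureSpace Ω] {F G f g f' g' : Ω → ℝ} {p q p' q' : ℝ}
    (hf : Measurable f) (hg : Measurable g) (hf' : Measurable f') (hg' : Measurable g')
    (hf2 : Integrable (fun ω => f ω ^ 2)) (hg2 : Integrable (fun ω => g ω ^ 2))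
    (hf'2 : Integrable (fun ω => f' ω ^ 2)) (hg'2 : Integrable (fun ω => g' ω ^ 2))
    (hF : ∀ ω, F ω = p * f ω + q * g ω) (hG : ∀ ω, G ω = p' * f' ω + q' * g' ω) :
    ∫ ω, F ω * G ω
      = p * p' * (∫ ω, f ω * f' ω) + p * q' * (∫ ω, f ω * g' ω)
        + q * p' * (∫ ω, g ω * f' ω) + q * q' * (∫ ω, g ω * g' ω) := by
  have i1 : Integrable (fun ω => p * p' * (f ω * f' ω)) :=
    (integrable_mul_of_sq hf hf' hf2 hf'2).const_mul _
  have i2 : Integrable (fun ω => p * q' * (f ω * g' ω)) :=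
    (integrable_mul_of_sq hf hg' hf2 hg'2).const_mul _
  have i3 : Integrable (fun ω => q * p' * (g ω * f' ω)) :=
    (integrable_mul_of_sq hg hf' hg2 hf'2).const_mul _
  have i4 : Integrable (fun ω => q * q' * (g ω * g' ω)) :=
    (integrable_mul_of_sq hg hg' hg2 hg'2).const_mul _
  have i34 : Integrable (fun ω => q * p' * (g ω * f' ω) + q * q' * (g ω * g' ω)) := i3.add i4
  have i234 : Integrable (fun ω => p * q' * (f ω * g' ω)
      + (q * p' * (g ω * f' ω) + q * q' * (g ω * g' ω))) := i2.add i34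
  have h : (fun ω => F ω * G ω) = fun ω => p * p' * (f ω * f' ω)
      + (p * q' * (f ω * g' ω) + (q * p' * (g ω * f' ω) + q * q' * (g ω * g' ω))) := by
    funext ω; rw [hF, hG]; ring
  rw [h, integral_add i1 i234, integral_add i2 i34, integral_add i3 i4,
    integral_const_mul, integral_const_mul, integral_const_mul, integral_const_mul]
  ring

lemma sum_delta_mul {n : ℕ} (p : ℕ) (hp : p ≤ n) (g : ℕ → ℝ) :
    ∑ j ∈ Finset.range (n+1), (if j = p then (1:ℝ) else 0) * g j = g p := by
  have h1 : ∀ j, (if j = p then (1:ℝ) else 0) * g j = if j = p then g j else 0 := by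
    intro j; split_ifs <;> ring
  simp_rw [h1]
  rw [Finset.sum_ite_eq', if_pos (Finset.mem_range.mpr (by omega))]

lemma sum_two_delta_mul {n : ℕ} (p q : ℕ) (hp : p ≤ n) (hq : q ≤ n) (c : ℝ) (g : ℕ → ℝ) :
    ∑ j ∈ Finset.range (n+1),
        (c * ((if j = p then (1:ℝ) else 0) - (if j = q then 1 else 0))) * g j
      = c * (g p - g q) := by
  have h1 : ∀ j, (c * ((if j = p then (1:ℝ) else 0) - (if j = q then 1 else 0))) * g j
      = c * ((if j = p then g j else 0) - (if j = q then g j else 0)) := by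
    intro j; split_ifs <;> ring
  simp_rw [h1]
  rw [← Finset.mul_sum, Finset.sum_sub_distrib, Finset.sum_ite_eq', Finset.sum_ite_eq',
    if_pos (Finset.mem_range.mpr (by omega)), if_pos (Finset.mem_range.mpr (by omega))]

lemma final_numeric (σ τ N Q : ℝ) (hN2 : 2 ≤ N) (hQ0 : 0 ≤ Q)
    (hQb : Q ≤ N * (3 * (σ ^ 2 + 2 * τ ^ 2) ^ 2)) :
    ((2 * N)⁻¹) ^ 2 * (((N - 1) * (σ ^ 2 / N + 2 * τ ^ 2)) ^ 2 + 2 * Q)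
      + (-2 * τ ^ 2 * (2 * N)⁻¹ * ((N - 1) * (σ ^ 2 / N + 2 * τ ^ 2)) + τ ^ 4)
      ≤ 3 * (σ ^ 2 + 2 * τ ^ 2) ^ 2 / N := by
  set K : ℝ := σ ^ 2 + 2 * τ ^ 2 with hK
  have hN0 : (0:ℝ) < N := by linarith
  have hterm1 : ((2 * N)⁻¹) ^ 2 * (((N - 1) * (σ ^ 2 / N + 2 * τ ^ 2)) ^ 2)
      + (-2 * τ ^ 2 * (2 * N)⁻¹) * ((N - 1) * (σ ^ 2 / N + 2 * τ ^ 2)) + τ ^ 4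
      ≤ K ^ 2 / N := by
    have he : ((2 * N)⁻¹ * ((N - 1) * (σ ^ 2 / N + 2 * τ ^ 2)) - τ ^ 2)
        = ((N - 1) * σ ^ 2 - 2 * τ ^ 2 * N) / (2 * N ^ 2) := by
      field_simp
      ring
    have hsq : ((2 * N)⁻¹ * ((N - 1) * (σ ^ 2 / N + 2 * τ ^ 2)) - τ ^ 2) ^ 2
        ≤ K ^ 2 / N := by
      rw [he, div_pow, div_le_div_iff₀ (by positivity) (by positivity)]
      have hb : ((N - 1) * σ ^ 2 - 2 * τ ^ 2 * N) ^ 2 ≤ (N * K) ^ 2 := by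
        have hσn : (0:ℝ) ≤ (2 * N - 1) * σ ^ 2 := mul_nonneg (by linarith) (sq_nonneg σ)
        have hτn : (0:ℝ) ≤ N * τ ^ 2 := mul_nonneg hN0.le (sq_nonneg τ)
        have h1 : -(N * K) ≤ (N - 1) * σ ^ 2 - 2 * τ ^ 2 * N := by
          rw [hK]; nlinarith [hσn, hτn]
        have h2 : (N - 1) * σ ^ 2 - 2 * τ ^ 2 * N ≤ N * K := by
          rw [hK]; nlinarith [sq_nonneg σ, hτn]
        exact sq_le_sq' h1 h2
      calc ((N - 1) * σ ^ 2 - 2 * τ ^ 2 * N) ^ 2 * N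
          ≤ (N * K) ^ 2 * N := mul_le_mul_of_nonneg_right hb hN0.le
        _ ≤ K ^ 2 * (2 * N ^ 2) ^ 2 := by
            have hx : (0:ℝ) ≤ K ^ 2 * N ^ 3 * (4 * N - 1) :=
              mul_nonneg (by positivity) (by linarith)
            nlinarith [hx]
    calc ((2 * N)⁻¹) ^ 2 * (((N - 1) * (σ ^ 2 / N + 2 * τ ^ 2)) ^ 2)
          + (-2 * τ ^ 2 * (2 * N)⁻¹) * ((N - 1) * (σ ^ 2 / N + 2 * τ ^ 2)) + τ ^ 4
        = ((2 * N)⁻¹ * ((N - 1) * (σ ^ 2 / N + 2 * τ ^ 2)) - τ ^ 2) ^ 2 := by ring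
      _ ≤ K ^ 2 / N := hsq
  have hterm2 : ((2 * N)⁻¹) ^ 2 * (2 * Q) ≤ 2 * K ^ 2 / N := by
    have h1 : ((2 * N)⁻¹) ^ 2 * (2 * Q) ≤ ((2 * N)⁻¹) ^ 2 * (2 * (N * (3 * K ^ 2))) := by
      apply mul_le_mul_of_nonneg_left _ (by positivity)
      linarith [hQb]
    have h2 : ((2 * N)⁻¹) ^ 2 * (2 * (N * (3 * K ^ 2))) = 3 * K ^ 2 / (2 * N) := by
      field_simp
    rw [h2] at h1
    have h3 : 3 * K ^ 2 / (2 * N) ≤ 2 * K ^ 2 / N := by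
      rw [div_le_div_iff₀ (by positivity) (by positivity)]
      nlinarith [mul_nonneg (sq_nonneg K) hN0.le]
    linarith
  calc ((2 * N)⁻¹) ^ 2 * (((N - 1) * (σ ^ 2 / N + 2 * τ ^ 2)) ^ 2 + 2 * Q)
      + (-2 * τ ^ 2 * (2 * N)⁻¹ * ((N - 1) * (σ ^ 2 / N + 2 * τ ^ 2)) + τ ^ 4)
      = (((2 * N)⁻¹) ^ 2 * (((N - 1) * (σ ^ 2 / N + 2 * τ ^ 2)) ^ 2)
          + (-2 * τ ^ 2 * (2 * N)⁻¹) * ((N - 1) * (σ ^ 2 / N + 2 * τ ^ 2)) + τ ^ 4)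
        + ((2 * N)⁻¹) ^ 2 * (2 * Q) := by ring
    _ ≤ K ^ 2 / N + 2 * K ^ 2 / N := add_le_add hterm1 hterm2
    _ = 3 * K ^ 2 / N := by ring

end AuxiliaryForRealizedQV

theorem realizedQV_estimates_noise_variance (σ τ : ℝ) (hσ : 0 < σ) (hτ : 0 < τ)
    (Ω : ℕ → Type*) [∀ n, MeasureSpace (Ω n)] [∀ n, IsProbabilityMeasure (ℙ : Measure (Ω n))]
    (W η : (n : ℕ) → ℕ → Ω n → ℝ)
    (hmodel : ∀ n, IsSimplifiedModel n (W n) (η n)) :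
    ∃ C > 0, ∀ n : ℕ, 2 ≤ n →
      (∫ ω, ((2 * (n : ℝ))⁻¹ * (∑ i ∈ Finset.Icc 2 n,
          (obs σ τ (W n) (η n) i ω - obs σ τ (W n) (η n) (i - 1) ω) ^ 2) - τ ^ 2) ^ 2)
        ≤ C / n := by
  refine ⟨3 * (σ ^ 2 + 2 * τ ^ 2) ^ 2, by positivity, ?_⟩
  intro n hn
  obtain ⟨hWm, hηm, hG, hWW, hηη, hWη⟩ := hmodel n
  have hN2 : (2:ℝ) ≤ (n:ℝ) := by exact_mod_cast hn
  have hN0 : (0:ℝ) < (n:ℝ) := by linarith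
  -- the generic linear combination
  set S : (ℕ → ℝ) → (ℕ → ℝ) → Ω n → ℝ :=
    fun a b ω => ∑ j ∈ Finset.range (n + 1), (a j * W n j ω + b j * η n j ω) with hS
  have hSm : ∀ a b, Measurable (S a b) := fun a b =>
    Finset.measurable_sum _ fun j _ => ((hWm j).const_mul _).add ((hηm j).const_mul _)
  have hSmom : ∀ a b, (∀ k, Integrable fun ω => S a b ω ^ k) ∧
      ∫ ω, S a b ω ^ 4 = 3 * (∫ ω, S a b ω ^ 2) ^ 2 := by
    intro a b
    obtain ⟨v, hv⟩ := hG a b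
    have hv' : Measure.map (S a b) ℙ = gaussianReal 0 v := hv
    exact gaussian_rv_moments (hSm a b) hv'
  -- the increments
  set X : ℕ → Ω n → ℝ := fun i ω =>
    σ * (W n i ω - W n (i - 1) ω) + τ * (η n i ω - η n (i - 1) ω) with hX
  have hXm : ∀ i, Measurable (X i) := fun i =>
    (((hWm i).sub (hWm (i - 1))).const_mul σ).add (((hηm i).sub (hηm (i - 1))).const_mul τ)
  set dlt : ℕ → ℕ → ℝ :=
    fun i j => (if j = i then (1:ℝ) else 0) - (if j = i - 1 then 1 else 0) with hdlt
  have hXS : ∀ i, i ≤ n → ∀ ω,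
      X i ω = S (fun j => σ * dlt i j) (fun j => τ * dlt i j) ω := by
    intro i hi ω
    simp only [hX, hS, hdlt]
    rw [Finset.sum_add_distrib,
      sum_two_delta_mul i (i - 1) hi (by omega) σ (fun j => W n j ω),
      sum_two_delta_mul i (i - 1) hi (by omega) τ (fun j => η n j ω)]
  have hXmom : ∀ i, i ≤ n → (∀ k, Integrable fun ω => X i ω ^ k) ∧
      ∫ ω, X i ω ^ 4 = 3 * (∫ ω, X i ω ^ 2) ^ 2 := by
    intro i hi
    have h := hSmom (fun j => σ * dlt i j) (fun j => τ * dlt i j)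
    constructor
    · intro k; simpa only [← hXS i hi] using h.1 k
    · simpa only [← hXS i hi] using h.2
  -- square-integrability of the basic variables
  have hW2 : ∀ j, j ≤ n → Integrable (fun ω => W n j ω ^ 2) := by
    intro j hj
    have he : ∀ ω, W n j ω = S (fun l => if l = j then (1:ℝ) else 0) (fun _ => 0) ω := by
      intro ω
      simp only [hS, zero_mul, add_zero]
      exact (sum_delta_mul j hj (fun l => W n l ω)).symm
    simpa only [← he] using (hSmom (fun l => if l = j then (1:ℝ) else 0) (fun _ => 0)).1 2
  have hη2 : ∀ j, j ≤ n → Integrable (fun ω => η n j ω ^ 2) := by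
    intro j hj
    have he : ∀ ω, η n j ω = S (fun _ => 0) (fun l => if l = j then (1:ℝ) else 0) ω := by
      intro ω
      simp only [hS, zero_mul, zero_add]
      exact (sum_delta_mul j hj (fun l => η n l ω)).symm
    simpa only [← he] using (hSmom (fun _ => 0) (fun l => if l = j then (1:ℝ) else 0)).1 2
  -- covariance structure
  have hηWint : ∀ p q, p ≤ n → q ≤ n → ∫ ω, η n p ω * W n q ω = 0 := by
    intro p q hp hq
    rw [show (fun ω => η n p ω * W n q ω) = fun ω => W n q ω * η n p ω from
      funext fun ω => by ring]
    exact hWη q p hq hp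
  have hcov : ∀ i j, 2 ≤ i → i ≤ n → 2 ≤ j → j ≤ n →
      ∫ ω, X i ω * X j ω
        = (if i = j then σ ^ 2 / n + 2 * τ ^ 2
            else if i + 1 = j ∨ j + 1 = i then -τ ^ 2 else 0) := by
    intro i j hi2 hin hj2 hjn
    have h1 : ∫ ω, X i ω * X j ω
        = σ * σ * (∫ ω, (W n i ω - W n (i-1) ω) * (W n j ω - W n (j-1) ω))
          + σ * τ * (∫ ω, (W n i ω - W n (i-1) ω) * (η n j ω - η n (j-1) ω))
          + τ * σ * (∫ ω, (η n i ω - η n (i-1) ω) * (W n j ω - W n (j-1) ω))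
          + τ * τ * (∫ ω, (η n i ω - η n (i-1) ω) * (η n j ω - η n (j-1) ω)) :=
      integral_bilinear ((hWm i).sub (hWm (i-1))) ((hηm i).sub (hηm (i-1)))
        ((hWm j).sub (hWm (j-1))) ((hηm j).sub (hηm (j-1)))
        (integrable_sq_sub (hWm i) (hWm (i-1)) (hW2 i hin) (hW2 (i-1) (by omega)))
        (integrable_sq_sub (hηm i) (hηm (i-1)) (hη2 i hin) (hη2 (i-1) (by omega)))
        (integrable_sq_sub (hWm j) (hWm (j-1)) (hW2 j hjn) (hW2 (j-1) (by omega)))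
        (integrable_sq_sub (hηm j) (hηm (j-1)) (hη2 j hjn) (hη2 (j-1) (by omega)))
        (fun ω => by simp only [hX]) (fun ω => by simp only [hX])
    have hWWe : ∫ ω, (W n i ω - W n (i-1) ω) * (W n j ω - W n (j-1) ω)
        = 1 * 1 * (∫ ω, W n i ω * W n j ω) + 1 * (-1) * (∫ ω, W n i ω * W n (j-1) ω)
          + (-1) * 1 * (∫ ω, W n (i-1) ω * W n j ω)
          + (-1) * (-1) * (∫ ω, W n (i-1) ω * W n (j-1) ω) :=
      integral_bilinear (hWm i) (hWm (i-1)) (hWm j) (hWm (j-1))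
        (hW2 i hin) (hW2 (i-1) (by omega)) (hW2 j hjn) (hW2 (j-1) (by omega))
        (fun ω => by ring) (fun ω => by ring)
    have hWηe : ∫ ω, (W n i ω - W n (i-1) ω) * (η n j ω - η n (j-1) ω)
        = 1 * 1 * (∫ ω, W n i ω * η n j ω) + 1 * (-1) * (∫ ω, W n i ω * η n (j-1) ω)
          + (-1) * 1 * (∫ ω, W n (i-1) ω * η n j ω)
          + (-1) * (-1) * (∫ ω, W n (i-1) ω * η n (j-1) ω) :=
      integral_bilinear (hWm i) (hWm (i-1)) (hηm j) (hηm (j-1))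
        (hW2 i hin) (hW2 (i-1) (by omega)) (hη2 j hjn) (hη2 (j-1) (by omega))
        (fun ω => by ring) (fun ω => by ring)
    have hηWe : ∫ ω, (η n i ω - η n (i-1) ω) * (W n j ω - W n (j-1) ω)
        = 1 * 1 * (∫ ω, η n i ω * W n j ω) + 1 * (-1) * (∫ ω, η n i ω * W n (j-1) ω)
          + (-1) * 1 * (∫ ω, η n (i-1) ω * W n j ω)
          + (-1) * (-1) * (∫ ω, η n (i-1) ω * W n (j-1) ω) :=
      integral_bilinear (hηm i) (hηm (i-1)) (hWm j) (hWm (j-1))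
        (hη2 i hin) (hη2 (i-1) (by omega)) (hW2 j hjn) (hW2 (j-1) (by omega))
        (fun ω => by ring) (fun ω => by ring)
    have hηηe : ∫ ω, (η n i ω - η n (i-1) ω) * (η n j ω - η n (j-1) ω)
        = 1 * 1 * (∫ ω, η n i ω * η n j ω) + 1 * (-1) * (∫ ω, η n i ω * η n (j-1) ω)
          + (-1) * 1 * (∫ ω, η n (i-1) ω * η n j ω)
          + (-1) * (-1) * (∫ ω, η n (i-1) ω * η n (j-1) ω) :=
      integral_bilinear (hηm i) (hηm (i-1)) (hηm j) (hηm (j-1))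
        (hη2 i hin) (hη2 (i-1) (by omega)) (hη2 j hjn) (hη2 (j-1) (by omega))
        (fun ω => by ring) (fun ω => by ring)
    rw [h1, hWWe, hWηe, hηWe, hηηe,
      hWW i j hin hjn, hWW i (j-1) hin (by omega), hWW (i-1) j (by omega) hjn,
      hWW (i-1) (j-1) (by omega) (by omega),
      hWη i j hin hjn, hWη i (j-1) hin (by omega), hWη (i-1) j (by omega) hjn,
      hWη (i-1) (j-1) (by omega) (by omega),
      hηWint i j hin hjn, hηWint i (j-1) hin (by omega), hηWint (i-1) j (by omega) hjn,
      hηWint (i-1) (j-1) (by omega) (by omega),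
      hηη i j hin hjn, hηη i (j-1) hin (by omega), hηη (i-1) j (by omega) hjn,
      hηη (i-1) (j-1) (by omega) (by omega)]
    simp only [← Nat.cast_min]
    by_cases h1' : i = j
    · subst h1'
      rw [if_pos rfl, if_pos rfl, if_neg (by omega), if_neg (by omega),
        if_pos rfl,
        show min i i = i from min_self i,
        show min i (i-1) = i - 1 by omega,
        show min (i-1) i = i - 1 by omega,
        show min (i-1) (i-1) = i - 1 from min_self _,
        Nat.cast_sub (by omega : 1 ≤ i)]
      field_simp
      ring
    by_cases h2' : i + 1 = j
    · rw [if_neg h1', if_pos (Or.inl h2'), if_neg h1', if_pos (by omega : i = j - 1),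
        if_neg (by omega), if_neg (by omega),
        show min i j = i by omega, show min i (j-1) = i by omega,
        show min (i-1) j = i - 1 by omega, show min (i-1) (j-1) = i - 1 by omega,
        Nat.cast_sub (by omega : 1 ≤ i)]
      ring
    by_cases h3' : j + 1 = i
    · rw [if_neg h1', if_pos (Or.inr h3'), if_neg h1', if_neg (by omega),
        if_pos (by omega : i - 1 = j), if_neg (by omega),
        show min i j = j by omega, show min i (j-1) = j - 1 by omega,
        show min (i-1) j = j by omega, show min (i-1) (j-1) = j - 1 by omega,
        Nat.cast_sub (by omega : 1 ≤ j)]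
      ring
    · rw [if_neg h1', if_neg (by omega : ¬(i + 1 = j ∨ j + 1 = i)), if_neg h1',
        if_neg (by omega), if_neg (by omega), if_neg (by omega)]
      rcases Nat.lt_or_ge i j with hlt | hge
      · rw [show min i j = i by omega, show min i (j-1) = i by omega,
          show min (i-1) j = i - 1 by omega, show min (i-1) (j-1) = i - 1 by omega]
        ring
      · rw [show min i j = j by omega, show min i (j-1) = j - 1 by omega,
          show min (i-1) j = j by omega, show min (i-1) (j-1) = j - 1 by omega]
        ring
  -- Isserlis
  have hIss : ∀ i j, i ≤ n → j ≤ n →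
      ∫ ω, X i ω ^ 2 * X j ω ^ 2
        = (∫ ω, X i ω ^ 2) * (∫ ω, X j ω ^ 2) + 2 * (∫ ω, X i ω * X j ω) ^ 2 := by
    intro i j hi hj
    obtain ⟨hinti, h4i⟩ := hXmom i hi
    obtain ⟨hintj, h4j⟩ := hXmom j hj
    have haddrep : ∀ ω, X i ω + X j ω
        = S (fun l => σ * dlt i l + σ * dlt j l) (fun l => τ * dlt i l + τ * dlt j l) ω := by
      intro ω
      rw [hXS i hi ω, hXS j hj ω]
      simp only [hS]
      rw [← Finset.sum_add_distrib]
      exact Finset.sum_congr rfl fun l _ => by ring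
    have hsubrep : ∀ ω, X i ω - X j ω
        = S (fun l => σ * dlt i l - σ * dlt j l) (fun l => τ * dlt i l - τ * dlt j l) ω := by
      intro ω
      rw [hXS i hi ω, hXS j hj ω]
      simp only [hS]
      rw [← Finset.sum_sub_distrib]
      exact Finset.sum_congr rfl fun l _ => by ring
    have hadd := hSmom (fun l => σ * dlt i l + σ * dlt j l) (fun l => τ * dlt i l + τ * dlt j l)
    have hsub := hSmom (fun l => σ * dlt i l - σ * dlt j l) (fun l => τ * dlt i l - τ * dlt j l)
    refine isserlis_sq (hXm i) (hXm j) (hinti 2) (hintj 2) (hinti 4) (hintj 4)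
      ?_ ?_ h4i h4j ?_ ?_
    · simpa only [← haddrep] using hadd.1 4
    · simpa only [← hsubrep] using hsub.1 4
    · simpa only [← haddrep] using hadd.2
    · simpa only [← hsubrep] using hsub.2
  -- rewrite the goal's integrand via X
  have hobs : ∀ (i : ℕ) (ω : Ω n),
      obs σ τ (W n) (η n) i ω - obs σ τ (W n) (η n) (i - 1) ω = X i ω := by
    intro i ω; simp only [obs, hX]; ring
  have hmemle : ∀ i ∈ Finset.Icc 2 n, i ≤ n := fun i hi => (Finset.mem_Icc.mp hi).2
  have hmemge : ∀ i ∈ Finset.Icc 2 n, 2 ≤ i := fun i hi => (Finset.mem_Icc.mp hi).1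
  -- integrabilities for the expansion
  have hX2int : ∀ i ∈ Finset.Icc 2 n, Integrable (fun ω => X i ω ^ 2) :=
    fun i hi => (hXmom i (hmemle i hi)).1 2
  have hX22int : ∀ i ∈ Finset.Icc 2 n, ∀ j ∈ Finset.Icc 2 n,
      Integrable (fun ω => X i ω ^ 2 * X j ω ^ 2) := by
    intro i hi j hj
    refine integrable_mul_of_sq ((hXm i).pow_const 2) ((hXm j).pow_const 2) ?_ ?_
    · rw [show (fun ω => (X i ω ^ 2) ^ 2) = fun ω => X i ω ^ 4 from funext fun ω => by ring]
      exact (hXmom i (hmemle i hi)).1 4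
    · rw [show (fun ω => (X j ω ^ 2) ^ 2) = fun ω => X j ω ^ 4 from funext fun ω => by ring]
      exact (hXmom j (hmemle j hj)).1 4
  have hsum2 : Integrable (fun ω => ∑ i ∈ Finset.Icc 2 n, X i ω ^ 2) :=
    integrable_finset_sum _ hX2int
  have hdbl : Integrable (fun ω => ∑ i ∈ Finset.Icc 2 n, ∑ j ∈ Finset.Icc 2 n,
      X i ω ^ 2 * X j ω ^ 2) :=
    integrable_finset_sum _ (fun i hi => integrable_finset_sum _ (fun j hj => hX22int i hi j hj))
  -- main expansion
  have hstep1 : ∫ ω, ((2 * (n:ℝ))⁻¹ * (∑ i ∈ Finset.Icc 2 n, X i ω ^ 2) - τ ^ 2) ^ 2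
      = ((2 * (n:ℝ))⁻¹) ^ 2 * (∑ i ∈ Finset.Icc 2 n, ∑ j ∈ Finset.Icc 2 n,
          ∫ ω, X i ω ^ 2 * X j ω ^ 2)
        + ((-2 * τ ^ 2 * (2 * (n:ℝ))⁻¹) * (∑ i ∈ Finset.Icc 2 n, ∫ ω, X i ω ^ 2) + τ ^ 4) := by
    have hpt : ∀ ω, ((2 * (n:ℝ))⁻¹ * (∑ i ∈ Finset.Icc 2 n, X i ω ^ 2) - τ ^ 2) ^ 2
        = ((2 * (n:ℝ))⁻¹) ^ 2 * (∑ i ∈ Finset.Icc 2 n, ∑ j ∈ Finset.Icc 2 n,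
            X i ω ^ 2 * X j ω ^ 2)
          + ((-2 * τ ^ 2 * (2 * (n:ℝ))⁻¹) * (∑ i ∈ Finset.Icc 2 n, X i ω ^ 2) + τ ^ 4) := by
      intro ω
      rw [← Finset.sum_mul_sum]
      ring
    have j1 : Integrable (fun ω => ((2 * (n:ℝ))⁻¹) ^ 2 * ∑ i ∈ Finset.Icc 2 n,
        ∑ j ∈ Finset.Icc 2 n, X i ω ^ 2 * X j ω ^ 2) := hdbl.const_mul _
    have j2 : Integrable (fun ω => (-2 * τ ^ 2 * (2 * (n:ℝ))⁻¹) *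
        ∑ i ∈ Finset.Icc 2 n, X i ω ^ 2) := hsum2.const_mul _
    have j3 : Integrable (fun _ : Ω n => τ ^ 4) := integrable_const _
    have j23 : Integrable (fun ω => (-2 * τ ^ 2 * (2 * (n:ℝ))⁻¹) *
        (∑ i ∈ Finset.Icc 2 n, X i ω ^ 2) + τ ^ 4) := j2.add j3
    rw [integral_congr_ae (Filter.Eventually.of_forall hpt),
      integral_add j1 j23, integral_add j2 j3,
      integral_const_mul, integral_const_mul,
      integral_finset_sum _ (fun i hi =>
        integrable_finset_sum _ (fun j hj => hX22int i hi j hj)),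
      integral_finset_sum _ hX2int, integral_const]
    rw [Finset.sum_congr rfl (fun i hi =>
      integral_finset_sum _ (fun j hj => hX22int i hi j hj))]
    simp [measure_univ]
  -- values
  have hsval : ∀ i ∈ Finset.Icc 2 n, ∫ ω, X i ω ^ 2 = σ ^ 2 / n + 2 * τ ^ 2 := by
    intro i hi
    have h := hcov i i (hmemge i hi) (hmemle i hi) (hmemge i hi) (hmemle i hi)
    rw [if_pos rfl] at h
    rw [show (fun ω => X i ω ^ 2) = fun ω => X i ω * X i ω from funext fun ω => by ring]
    exact h
  have hPval : ∑ i ∈ Finset.Icc 2 n, ∫ ω, X i ω ^ 2 = ((n:ℝ) - 1) * (σ ^ 2 / n + 2 * τ ^ 2) := by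
    rw [Finset.sum_congr rfl hsval, Finset.sum_const, Nat.card_Icc]
    have : ((n + 1 - 2 : ℕ) : ℝ) = (n:ℝ) - 1 := by
      rw [show n + 1 - 2 = n - 1 by omega, Nat.cast_sub (by omega : 1 ≤ n)]
      norm_num
    rw [nsmul_eq_mul, this]
  -- bound on the covariance double sum
  have hQbound : ∑ i ∈ Finset.Icc 2 n, ∑ j ∈ Finset.Icc 2 n, (∫ ω, X i ω * X j ω) ^ 2
      ≤ (n:ℝ) * (3 * (σ ^ 2 + 2 * τ ^ 2) ^ 2) := by
    have hinner : ∀ i ∈ Finset.Icc 2 n,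
        ∑ j ∈ Finset.Icc 2 n, (∫ ω, X i ω * X j ω) ^ 2 ≤ 3 * (σ ^ 2 + 2 * τ ^ 2) ^ 2 := by
      intro i hi
      have hle : ∀ j ∈ Finset.Icc 2 n, (∫ ω, X i ω * X j ω) ^ 2
          ≤ (if i = j ∨ i + 1 = j ∨ j + 1 = i then (σ ^ 2 + 2 * τ ^ 2) ^ 2 else 0) := by
        intro j hj
        rw [hcov i j (hmemge i hi) (hmemle i hi) (hmemge j hj) (hmemle j hj)]
        by_cases h1' : i = j
        · rw [if_pos h1', if_pos (Or.inl h1')]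
          have hb1 : (0:ℝ) ≤ σ ^ 2 / n + 2 * τ ^ 2 := by positivity
          have hb2 : σ ^ 2 / n + 2 * τ ^ 2 ≤ σ ^ 2 + 2 * τ ^ 2 := by
            have : σ ^ 2 / n ≤ σ ^ 2 := by
              apply div_le_self (sq_nonneg σ)
              linarith
            linarith
          nlinarith
        by_cases h2' : i + 1 = j ∨ j + 1 = i
        · rw [if_neg h1', if_pos h2', if_pos (Or.inr h2')]
          nlinarith [sq_nonneg σ, sq_nonneg τ, sq_nonneg (σ^2 + τ^2)]
        · rw [if_neg h1', if_neg h2', if_neg (by tauto)]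
          norm_num
      calc ∑ j ∈ Finset.Icc 2 n, (∫ ω, X i ω * X j ω) ^ 2
          ≤ ∑ j ∈ Finset.Icc 2 n, (if i = j ∨ i + 1 = j ∨ j + 1 = i then (σ ^ 2 + 2 * τ ^ 2) ^ 2 else 0) :=
            Finset.sum_le_sum hle
        _ = ∑ j ∈ (Finset.Icc 2 n).filter (fun j => i = j ∨ i + 1 = j ∨ j + 1 = i), (σ ^ 2 + 2 * τ ^ 2) ^ 2 :=
            (Finset.sum_filter _ _).symm
        _ ≤ 3 * (σ ^ 2 + 2 * τ ^ 2) ^ 2 := by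
            have hcard : ((Finset.Icc 2 n).filter
                (fun j => i = j ∨ i + 1 = j ∨ j + 1 = i)).card ≤ 3 := by
              have hsub : (Finset.Icc 2 n).filter (fun j => i = j ∨ i + 1 = j ∨ j + 1 = i)
                  ⊆ {i, i + 1, i - 1} := by
                intro j hj
                simp only [Finset.mem_filter] at hj
                simp only [Finset.mem_insert, Finset.mem_singleton]
                omega
              calc _ ≤ ({i, i + 1, i - 1} : Finset ℕ).card := Finset.card_le_card hsub
                _ ≤ 3 := by
                  apply le_trans (Finset.card_insert_le _ _)
                  have := Finset.card_insert_le (i+1) ({i - 1} : Finset ℕ)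
                  simp only [Finset.card_singleton] at this ⊢
                  omega
            rw [Finset.sum_const, nsmul_eq_mul]
            have hKnn : (0:ℝ) ≤ (σ ^ 2 + 2 * τ ^ 2) ^ 2 := by positivity
            have hc3 : (((Finset.Icc 2 n).filter
                (fun j => i = j ∨ i + 1 = j ∨ j + 1 = i)).card : ℝ) ≤ 3 := by
              exact_mod_cast hcard
            exact mul_le_mul_of_nonneg_right hc3 hKnn
    calc ∑ i ∈ Finset.Icc 2 n, ∑ j ∈ Finset.Icc 2 n, (∫ ω, X i ω * X j ω) ^ 2
        ≤ ∑ i ∈ Finset.Icc 2 n, 3 * (σ ^ 2 + 2 * τ ^ 2) ^ 2 := Finset.sum_le_sum hinner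
      _ ≤ (n:ℝ) * (3 * (σ ^ 2 + 2 * τ ^ 2) ^ 2) := by
          rw [Finset.sum_const, nsmul_eq_mul, Nat.card_Icc]
          apply mul_le_mul_of_nonneg_right _ (by positivity)
          have : ((n + 1 - 2 : ℕ) : ℝ) ≤ (n:ℝ) := by
            exact_mod_cast (by omega : n + 1 - 2 ≤ n)
          exact this
  have hQnonneg : (0:ℝ) ≤ ∑ i ∈ Finset.Icc 2 n, ∑ j ∈ Finset.Icc 2 n,
      (∫ ω, X i ω * X j ω) ^ 2 :=
    Finset.sum_nonneg fun i _ => Finset.sum_nonneg fun j _ => sq_nonneg _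
  -- assemble
  have hgoal_eq : (∫ ω, ((2 * (n : ℝ))⁻¹ * (∑ i ∈ Finset.Icc 2 n,
        (obs σ τ (W n) (η n) i ω - obs σ τ (W n) (η n) (i - 1) ω) ^ 2) - τ ^ 2) ^ 2)
      = ∫ ω, ((2 * (n:ℝ))⁻¹ * (∑ i ∈ Finset.Icc 2 n, X i ω ^ 2) - τ ^ 2) ^ 2 := by
    refine integral_congr_ae (Filter.Eventually.of_forall fun ω => ?_)
    simp only [hobs]
  rw [hgoal_eq, hstep1,
    Finset.sum_congr rfl (fun i hi => Finset.sum_congr rfl (fun j hj =>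
      hIss i j (hmemle i hi) (hmemle j hj))), hPval]
  -- split the double sum
  have hsplit : ∑ i ∈ Finset.Icc 2 n, ∑ j ∈ Finset.Icc 2 n,
      ((∫ ω, X i ω ^ 2) * (∫ ω, X j ω ^ 2) + 2 * (∫ ω, X i ω * X j ω) ^ 2)
      = (((n:ℝ) - 1) * (σ ^ 2 / n + 2 * τ ^ 2)) ^ 2
        + 2 * ∑ i ∈ Finset.Icc 2 n, ∑ j ∈ Finset.Icc 2 n, (∫ ω, X i ω * X j ω) ^ 2 := by
    have h1 : ∑ i ∈ Finset.Icc 2 n, ∑ j ∈ Finset.Icc 2 n,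
        (∫ ω, X i ω ^ 2) * (∫ ω, X j ω ^ 2)
        = (∑ i ∈ Finset.Icc 2 n, ∫ ω, X i ω ^ 2) * (∑ j ∈ Finset.Icc 2 n, ∫ ω, X j ω ^ 2) :=
      (Finset.sum_mul_sum _ _ _ _).symm
    have h2 : ∑ i ∈ Finset.Icc 2 n, ∑ j ∈ Finset.Icc 2 n, 2 * (∫ ω, X i ω * X j ω) ^ 2
        = 2 * ∑ i ∈ Finset.Icc 2 n, ∑ j ∈ Finset.Icc 2 n, (∫ ω, X i ω * X j ω) ^ 2 := by
      rw [Finset.mul_sum]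
      exact Finset.sum_congr rfl fun i _ => (Finset.mul_sum _ _ _).symm
    simp only [Finset.sum_add_distrib]
    rw [h1, h2, hPval]
    ring
  rw [hsplit]
  -- final numeric bound
  exact final_numeric σ τ (n:ℝ)
    (∑ i ∈ Finset.Icc 2 n, ∑ j ∈ Finset.Icc 2 n, (∫ ω, X i ω * X j ω) ^ 2)
    hN2 hQnonneg hQbound
end
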